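/- arXiv:2407.04935 — 10 statements merged into one kernel-verified Lean document; each statement's English description precedes it below -/
import Mathlib

section
/- Let n ∈ ℕ and let p(x) = c₀ + c₁x + ⋯ + cₙxⁿ be a real polynomial with coefficients c₀,…,cₙ not all zero. Let I ⊂ ℝ be a bounded interval, let 0 < δ ≤ 1, and let I_δ ⊆ I be a subinterval with |I_δ| = δ|I| > 0. Then ‖p‖_I ≤ (n+1)·(nⁿ/δⁿ)·‖p‖_{I_δ}. -/
open Set

/-- Let `p(x) = c₀ + c₁x + ⋯ + cₙxⁿ` be a real polynomial with coefficients
not all zero, `I = [a,b]` a bounded interval, `0 < δ ≤ 1`, and `I_δ = [a',b'] ⊆ I` a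
subinterval with `|I_δ| = δ·|I| > 0`. Then `‖p‖_I ≤ (n+1)·(nⁿ/δⁿ)·‖p‖_{I_δ}`, where
`‖f‖_J = sup_{t ∈ J} |f(t)|`. -/
theorem polynomial_delta_good
    (n : ℕ) (c : Fin (n + 1) → ℝ) (hc : c ≠ 0)
    (a b a' b' : ℝ) (δ : ℝ) (hδ0 : 0 < δ) (hδ1 : δ ≤ 1)
    (hsub1 : a ≤ a') (hsub2 : b' ≤ b)
    (hlen : b' - a' = δ * (b - a)) (hpos : 0 < b' - a')
    (p : ℝ → ℝ) (hp : ∀ x, p x = ∑ i : Fin (n + 1), c i * x ^ (i : ℕ)) :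
    ∀ x ∈ Icc a b,
      |p x| ≤ (n + 1) * ((n : ℝ) ^ n / δ ^ n) *
        sSup ((fun t => |p t|) '' Icc a' b') := by
  intro x hx
  classical
  set L : ℝ := b' - a' with hLdef
  have hL : 0 < L := hpos
  have hba : 0 < b - a := by
    nlinarith
  have hab' : a' ≤ b' := by linarith
  -- the polynomial
  set P : Polynomial ℝ := ∑ i : Fin (n + 1), Polynomial.C (c i) * Polynomial.X ^ (i : ℕ)
    with hPdef
  have hPeval : ∀ t : ℝ, P.eval t = p t := by
    intro t
    rw [hp, hPdef, Polynomial.eval_finset_sum]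
    simp
  -- nodes
  set v : ℕ → ℝ := fun j => a' + j * (L / n) with hvdef
  set s : Finset ℕ := Finset.range (n + 1) with hsdef
  have hvdiff : ∀ i ∈ s, ∀ j ∈ s, i ≠ j → L / n ≤ |v i - v j| := by
    intro i hi j hj hij
    have hi2 : i < n + 1 := by simpa [hsdef] using hi
    have hj2 : j < n + 1 := by simpa [hsdef] using hj
    have hn : 1 ≤ n := by omega
    have hn0 : (0:ℝ) < n := by exact_mod_cast hn
    have hz : (1:ℤ) ≤ |(i:ℤ) - (j:ℤ)| :=
      Int.one_le_abs (sub_ne_zero.mpr (by exact_mod_cast hij))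
    have h1 : (1:ℝ) ≤ |(i:ℝ) - (j:ℝ)| := by exact_mod_cast hz
    have hvv : v i - v j = ((i:ℝ) - j) * (L / n) := by
      simp only [hvdef]; ring
    rw [hvv, abs_mul, abs_of_pos (div_pos hL hn0)]
    nlinarith [div_pos hL hn0]
  have hinj : Set.InjOn v ↑s := by
    intro i hi j hj hij
    by_contra hne
    have hi' : i ∈ s := hi
    have hj' : j ∈ s := hj
    have hi2 : i < n + 1 := by simpa [hsdef] using hi'
    have hj2 : j < n + 1 := by simpa [hsdef] using hj'
    have hn : 1 ≤ n := by omega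
    have hn0 : (0:ℝ) < n := by exact_mod_cast hn
    have hd := hvdiff i hi' j hj' hne
    rw [hij, sub_self, abs_zero] at hd
    nlinarith [div_pos hL hn0]
  have hvmem : ∀ j ∈ s, v j ∈ Icc a' b' := by
    intro j hj
    simp only [hsdef, Finset.mem_range] at hj
    have hj' : j ≤ n := by omega
    constructor
    · simp only [hvdef]
      rcases Nat.eq_zero_or_pos n with h | h
      · subst h; simp
      · have hn0 : (0:ℝ) < n := by exact_mod_cast h
        nlinarith [div_pos hL hn0, (by exact_mod_cast Nat.zero_le j : (0:ℝ) ≤ j)]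
    · simp only [hvdef]
      rcases Nat.eq_zero_or_pos n with h | h
      · subst h
        simp only [Nat.le_zero] at hj'
        subst hj'
        simp
        linarith
      · have hn0 : (0:ℝ) < n := by exact_mod_cast h
        have hjn : (j:ℝ) ≤ n := by exact_mod_cast hj'
        have : (j:ℝ) * (L / n) ≤ (n:ℝ) * (L / n) := by
          apply mul_le_mul_of_nonneg_right hjn (le_of_lt (div_pos hL hn0))
        have hnn : (n:ℝ) * (L / n) = L := by field_simp
        simp only [hLdef] at *
        linarith
  -- degree bound
  have hdeg : P.degree < (s.card : ℕ) := by
    have hcard : s.card = n + 1 := by simp [hsdef]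
    rw [hcard]
    refine lt_of_le_of_lt (Polynomial.degree_sum_le _ _) ?_
    rw [Finset.sup_lt_iff (by exact_mod_cast WithBot.bot_lt_coe (n+1))]
    intro i _
    refine lt_of_le_of_lt (Polynomial.degree_C_mul_X_pow_le _ _) ?_
    exact_mod_cast Nat.lt_of_lt_of_le i.2 (le_refl (n+1))
  -- interpolation identity
  have hinterp := Lagrange.eq_interpolate (f := P) hinj hdeg
  -- sSup facts
  have hpcont : Continuous fun t => |p t| := by
    have : (fun t => |p t|) = fun t => |∑ i : Fin (n + 1), c i * t ^ (i : ℕ)| := by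
      funext t; rw [hp]
    rw [this]
    fun_prop
  have hbdd : BddAbove ((fun t => |p t|) '' Icc a' b') :=
    (isCompact_Icc.image hpcont).bddAbove
  set M : ℝ := sSup ((fun t => |p t|) '' Icc a' b') with hMdef
  have hMle : ∀ j ∈ s, |p (v j)| ≤ M := by
    intro j hj
    exact le_csSup hbdd ⟨v j, hvmem j hj, rfl⟩
  have hM0 : 0 ≤ M := by
    have := le_csSup hbdd ⟨a', ⟨le_refl a', hab'⟩, rfl⟩
    exact le_trans (abs_nonneg _) this
  -- basis bound
  have hxv : ∀ j ∈ s, |x - v j| ≤ b - a := by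
    intro j hj
    have h1 := hvmem j hj
    rw [abs_le]
    constructor <;> [nlinarith [hx.1, hx.2, h1.1, h1.2]; nlinarith [hx.1, hx.2, h1.1, h1.2]]
  have hbasis : ∀ i ∈ s, |Polynomial.eval x (Lagrange.basis s v i)| ≤ (n:ℝ)^n / δ^n := by
    intro i hi
    rw [Lagrange.basis, Polynomial.eval_prod]
    rw [Finset.abs_prod]
    have hcard : (s.erase i).card = n := by
      rw [Finset.card_erase_of_mem hi]; simp [hsdef]
    have hfac : ∀ j ∈ s.erase i,
        |Polynomial.eval x (Lagrange.basisDivisor (v i) (v j))| ≤ (n:ℝ) / δ := by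
      intro j hj
      obtain ⟨hji, hjs⟩ := Finset.mem_erase.mp hj
      have hn : 1 ≤ n := by
        simp only [hsdef, Finset.mem_range] at hi hjs
        omega
      have hn0 : (0:ℝ) < n := by exact_mod_cast hn
      have hd := hvdiff i hi j hjs (Ne.symm hji)
      have hLn : 0 < L / n := div_pos hL hn0
      have hvne : v i ≠ v j := by
        intro h
        rw [h, sub_self, abs_zero] at hd
        linarith
      rw [Lagrange.basisDivisor]
      rw [Polynomial.eval_mul, Polynomial.eval_C, abs_mul]
      have h1 : |(v i - v j)⁻¹| ≤ (n:ℝ) / L := by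
        rw [abs_inv]
        have hstep : |v i - v j|⁻¹ ≤ (L / n)⁻¹ :=
          inv_anti₀ hLn hd
        calc |v i - v j|⁻¹ ≤ (L / n)⁻¹ := hstep
          _ = (n:ℝ) / L := by rw [inv_div]
      have h2 : |Polynomial.eval x (Polynomial.X - Polynomial.C (v j))| ≤ b - a := by
        simp only [Polynomial.eval_sub, Polynomial.eval_X, Polynomial.eval_C]
        exact hxv j hjs
      calc |(v i - v j)⁻¹| * |Polynomial.eval x (Polynomial.X - Polynomial.C (v j))|
          ≤ ((n:ℝ)/L) * (b - a) := by
            apply mul_le_mul h1 h2 (abs_nonneg _) (by positivity)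
        _ = (n:ℝ) / δ := by
            have hba' : b - a = L / δ := by
              rw [eq_div_iff (ne_of_gt hδ0)]; linarith [hlen]
            rw [hba', div_mul_div_comm, mul_comm (n:ℝ) L,
              mul_div_mul_left _ _ (ne_of_gt hL)]
    calc ∏ j ∈ s.erase i, |Polynomial.eval x (Lagrange.basisDivisor (v i) (v j))|
        ≤ ∏ _j ∈ s.erase i, (n:ℝ)/δ := by
          apply Finset.prod_le_prod (fun j _ => abs_nonneg _) hfac
      _ = ((n:ℝ)/δ)^n := by rw [Finset.prod_const, hcard]
      _ = (n:ℝ)^n / δ^n := div_pow _ _ _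
  -- put it together
  have heval : p x = ∑ i ∈ s, P.eval (v i) * Polynomial.eval x (Lagrange.basis s v i) := by
    conv_lhs => rw [← hPeval x, hinterp]
    rw [Lagrange.interpolate_apply, Polynomial.eval_finset_sum]
    simp [Polynomial.eval_mul]
  rw [heval]
  calc |∑ i ∈ s, P.eval (v i) * Polynomial.eval x (Lagrange.basis s v i)|
      ≤ ∑ i ∈ s, |P.eval (v i) * Polynomial.eval x (Lagrange.basis s v i)| :=
        Finset.abs_sum_le_sum_abs _ _
    _ ≤ ∑ _i ∈ s, M * ((n:ℝ)^n / δ^n) := by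
        apply Finset.sum_le_sum
        intro i hi
        rw [abs_mul, hPeval]
        exact mul_le_mul (hMle i hi) (hbasis i hi) (abs_nonneg _) hM0
    _ = (n + 1) * ((n:ℝ)^n / δ^n) * M := by
        rw [Finset.sum_const]
        simp [hsdef]
        ring
end

section
/- Let I ⊂ ℝ be a bounded interval with |I| > 0 and let f : I → ℝ be continuous with ‖f‖_I > 0. Suppose there exist m ≥ 1 and r > 0 such that for every subinterval I′ ⊆ I with |I′| > 0 one has ‖f‖_I ≤ m·(|I|/|I′|)^r·‖f‖_{I′}, and suppose K ≥ 1 is an integer such that for every ε > 0 the set {t ∈ I : |f(t)| ≤ ε} has at most K connected components. Then for every ε > 0, the Lebesgue measure |{t ∈ I : |f(t)| ≤ ε}| ≤ m^{1/r} · K · (ε/‖f‖_I)^{1/r} · |I|. -/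
open Set MeasureTheory

/-- Let `I = [a,b]` be a bounded interval of positive length and
`f : I → ℝ` continuous with `‖f‖_I > 0`. Suppose there are `m ≥ 1` and `r > 0` such that
`‖f‖_I ≤ m·(|I|/|I′|)^r·‖f‖_{I′}` for every subinterval `I′ ⊆ I` of positive length, and
suppose `K ≥ 1` is an integer such that for every `ε > 0` the sublevel set
`{t ∈ I : |f(t)| ≤ ε}` has at most `K` connected components. Then for every `ε > 0`,
`|{t ∈ I : |f(t)| ≤ ε}| ≤ m^{1/r} · K · (ε/‖f‖_I)^{1/r} · |I|`. -/
theorem remez_implies_C_alpha_good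
    (a b : ℝ) (hab : a < b) (f : ℝ → ℝ) (hf : ContinuousOn f (Icc a b))
    (hnorm : 0 < sSup ((fun t => |f t|) '' Icc a b))
    (m r : ℝ) (hm : 1 ≤ m) (hr : 0 < r)
    (hRemez : ∀ a' b' : ℝ, a ≤ a' → a' < b' → b' ≤ b →
      sSup ((fun t => |f t|) '' Icc a b) ≤
        m * ((b - a) / (b' - a')) ^ r * sSup ((fun t => |f t|) '' Icc a' b'))
    (K : ℕ) (hK : 1 ≤ K)
    (hcomp : ∀ ε : ℝ, 0 < ε →
      ∃ C : Finset (Set ℝ), C.card ≤ K ∧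
        ∀ t ∈ {s ∈ Icc a b | |f s| ≤ ε},
          connectedComponentIn {s ∈ Icc a b | |f s| ≤ ε} t ∈ C) :
    ∀ ε : ℝ, 0 < ε →
      volume {t ∈ Icc a b | |f t| ≤ ε} ≤
        ENNReal.ofReal
          (m ^ (1 / r) * K * (ε / sSup ((fun t => |f t|) '' Icc a b)) ^ (1 / r) * (b - a)) := by
  intro ε hε
  classical
  set M := sSup ((fun t => |f t|) '' Icc a b) with hM
  set S := {s ∈ Icc a b | |f s| ≤ ε} with hSdef
  have hD : (0:ℝ) < b - a := by linarith
  have hm0 : (0:ℝ) ≤ m := le_trans zero_le_one hm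
  have hεM : 0 < ε / M := div_pos hε hnorm
  set L : ℝ := m ^ (1 / r) * (ε / M) ^ (1 / r) * (b - a) with hLdef
  have hLpos : 0 < L := by
    apply mul_pos (mul_pos _ _) hD
    · exact Real.rpow_pos_of_pos (lt_of_lt_of_le one_pos hm) _
    · exact Real.rpow_pos_of_pos hεM _
  have hSclosed : IsClosed S := by
    have hEq : S = Icc a b ∩ (fun t => |f t|) ⁻¹' Iic ε := by
      ext t; simp [hSdef]
    rw [hEq]
    exact hf.abs.preimage_isClosed_of_isClosed isClosed_Icc isClosed_Iic
  obtain ⟨C, hCcard, hCmem⟩ := hcomp ε hε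
  set C' := C.filter (fun c => ∃ t ∈ S, c = connectedComponentIn S t) with hC'
  have hcompvol : ∀ c ∈ C', volume c ≤ ENNReal.ofReal L := by
    intro c hc
    obtain ⟨t, htS, rfl⟩ := (Finset.mem_filter.mp hc).2
    have htc : t ∈ connectedComponentIn S t := mem_connectedComponentIn htS
    have hcS : connectedComponentIn S t ⊆ S := connectedComponentIn_subset S t
    have hcI : connectedComponentIn S t ⊆ Icc a b := fun x hx => (hcS hx).1
    have hbdd : BddBelow (connectedComponentIn S t) := BddBelow.mono hcI bddBelow_Icc
    have hbdd' : BddAbove (connectedComponentIn S t) := BddAbove.mono hcI bddAbove_Icc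
    set a' := sInf (connectedComponentIn S t) with ha'def
    set b' := sSup (connectedComponentIn S t) with hb'def
    have hsub : connectedComponentIn S t ⊆ Icc a' b' := subset_Icc_csInf_csSup hbdd hbdd'
    have hvol : volume (connectedComponentIn S t) ≤ ENNReal.ofReal (b' - a') := by
      calc volume (connectedComponentIn S t) ≤ volume (Icc a' b') := measure_mono hsub
        _ = ENNReal.ofReal (b' - a') := Real.volume_Icc
    rcases le_or_gt b' a' with h | h
    · exact hvol.trans (ENNReal.ofReal_le_ofReal (by linarith))
    · have ha' : a ≤ a' := le_csInf ⟨t, htc⟩ (fun x hx => (hcI hx).1)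
      have hb' : b' ≤ b := csSup_le ⟨t, htc⟩ (fun x hx => (hcI hx).2)
      have hIccS : Icc a' b' ⊆ S := by
        have h1 : Ioo a' b' ⊆ connectedComponentIn S t :=
          (IsConnected.Ioo_csInf_csSup_subset ⟨⟨t, htc⟩, isPreconnected_connectedComponentIn⟩
            hbdd hbdd')
        have h2 : Icc a' b' = closure (Ioo a' b') := (closure_Ioo h.ne).symm
        rw [h2]
        exact hSclosed.closure_subset_iff.mpr (h1.trans hcS)
      have hsup : sSup ((fun t => |f t|) '' Icc a' b') ≤ ε := by
        apply csSup_le (Set.Nonempty.image _ (nonempty_Icc.mpr h.le))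
        rintro x ⟨y, hy, rfl⟩
        exact (hIccS hy).2
      have hd : (0:ℝ) < b' - a' := sub_pos.mpr h
      have key : M ≤ m * ((b - a) / (b' - a')) ^ r * ε := by
        calc M ≤ m * ((b - a) / (b' - a')) ^ r * sSup ((fun t => |f t|) '' Icc a' b') :=
              hRemez a' b' ha' h hb'
          _ ≤ m * ((b - a) / (b' - a')) ^ r * ε := by
              apply mul_le_mul_of_nonneg_left hsup
              positivity
      have h1 : (b' - a') ^ r ≤ (m * ε / M) * (b - a) ^ r := by
        rw [div_mul_eq_mul_div, le_div_iff₀ hnorm]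
        rw [Real.div_rpow hD.le hd.le] at key
        have hdr : 0 < (b' - a') ^ r := Real.rpow_pos_of_pos hd r
        have h2 : M * (b' - a') ^ r ≤ (m * ((b - a) ^ r / (b' - a') ^ r) * ε) * (b' - a') ^ r :=
          mul_le_mul_of_nonneg_right key hdr.le
        calc (b' - a') ^ r * M = M * (b' - a') ^ r := by ring
          _ ≤ (m * ((b - a) ^ r / (b' - a') ^ r) * ε) * (b' - a') ^ r := h2
          _ = m * ε * (b - a) ^ r := by field_simp
      have h3 : b' - a' ≤ (m * ε / M) ^ (1 / r) * (b - a) := by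
        have hmono := Real.rpow_le_rpow (Real.rpow_nonneg hd.le r) h1 (one_div_pos.mpr hr).le
        rw [← Real.rpow_mul hd.le, mul_one_div, div_self hr.ne', Real.rpow_one] at hmono
        rwa [Real.mul_rpow (by positivity) (by positivity),
          ← Real.rpow_mul hD.le, mul_one_div, div_self hr.ne', Real.rpow_one] at hmono
      have h4 : (m * ε / M) ^ (1 / r) = m ^ (1 / r) * (ε / M) ^ (1 / r) := by
        rw [mul_div_assoc, Real.mul_rpow hm0 hεM.le]
      refine hvol.trans (ENNReal.ofReal_le_ofReal ?_)
      rw [hLdef]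
      calc b' - a' ≤ (m * ε / M) ^ (1 / r) * (b - a) := h3
        _ = m ^ (1 / r) * (ε / M) ^ (1 / r) * (b - a) := by rw [h4]
  have hsubset : S ⊆ ⋃ c ∈ C', (c : Set ℝ) := by
    intro t ht
    refine Set.mem_biUnion ?_ (mem_connectedComponentIn ht)
    exact Finset.mem_filter.mpr ⟨hCmem t ht, t, ht, rfl⟩
  calc volume S ≤ volume (⋃ c ∈ C', (c : Set ℝ)) := measure_mono hsubset
    _ ≤ ∑ c ∈ C', volume c := measure_biUnion_finset_le _ _
    _ ≤ ∑ _c ∈ C', ENNReal.ofReal L := Finset.sum_le_sum hcompvol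
    _ = C'.card * ENNReal.ofReal L := by rw [Finset.sum_const, nsmul_eq_mul]
    _ ≤ (K : ENNReal) * ENNReal.ofReal L := by
        gcongr
        exact_mod_cast (Finset.card_filter_le _ _).trans hCcard
    _ = ENNReal.ofReal ((K : ℝ) * L) := by
        rw [← ENNReal.ofReal_natCast K, ← ENNReal.ofReal_mul (Nat.cast_nonneg K)]
    _ = ENNReal.ofReal (m ^ (1 / r) * K * (ε / M) ^ (1 / r) * (b - a)) := by
        congr 1; rw [hLdef]; ring
end

section
/- Let T₀ ≥ 1, ν ≥ 0, C > 0, α > 0, and let f : [T₀,∞) → ℝ be such that the function g(t) := t^ν · f(t) is (C,α)-good on [T₀,∞). Then for every interval [x,y] ⊆ [T₀,∞) such that |f(t)| ≤ |f(y)| for all t ∈ [x,y] and |f(y)| > 0, and for every η > 0, the Lebesgue measure |{t ∈ [x,y] : |f(t)| ≤ η}| ≤ C·(η/|f(y)|)^α·(y−x). -/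
open Set MeasureTheory

/-- A function `g` is `(C,α)`-good on the ray `[T₀,∞)` if for every bounded interval
`I = [a,b] ⊆ [T₀,∞)` with `‖g‖_I > 0` and every `ε > 0`,
`|{t ∈ I : |g(t)| ≤ ε}| ≤ C·(ε/‖g‖_I)^α·|I|`, where `‖g‖_I = sup_{t∈I}|g(t)|`. -/
def IsCAlphaGood (C α T₀ : ℝ) (g : ℝ → ℝ) : Prop :=
  ∀ a b : ℝ, T₀ ≤ a → a ≤ b →
    0 < sSup ((fun t => |g t|) '' Icc a b) →
    ∀ ε : ℝ, 0 < ε →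
      volume {t ∈ Icc a b | |g t| ≤ ε} ≤
        ENNReal.ofReal
          (C * (ε / sSup ((fun t => |g t|) '' Icc a b)) ^ α * (b - a))

/-- Let `T₀ ≥ 1`, `ν ≥ 0`, `C > 0`, `α > 0`, and `f : [T₀,∞) → ℝ` be such
that `g(t) := t^ν·f(t)` is `(C,α)`-good on `[T₀,∞)`. Then for every interval
`[x,y] ⊆ [T₀,∞)` such that `|f(t)| ≤ |f(y)|` on `[x,y]` and `|f(y)| > 0`, and every `η > 0`,
`|{t ∈ [x,y] : |f(t)| ≤ η}| ≤ C·(η/|f(y)|)^α·(y−x)`. -/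
theorem right_max_good_of_rpow_good
    (T₀ ν C α : ℝ) (hT₀ : 1 ≤ T₀) (hν : 0 ≤ ν) (hC : 0 < C) (hα : 0 < α)
    (f : ℝ → ℝ)
    (hgood : IsCAlphaGood C α T₀ (fun t => t ^ ν * f t)) :
    ∀ x y : ℝ, T₀ ≤ x → x ≤ y →
      (∀ t ∈ Icc x y, |f t| ≤ |f y|) → 0 < |f y| →
      ∀ η : ℝ, 0 < η →
        volume {t ∈ Icc x y | |f t| ≤ η} ≤
          ENNReal.ofReal (C * (η / |f y|) ^ α * (y - x)) := by
  intro x y hx hxy hmax hfy η hη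
  have hy0 : (0:ℝ) < y := lt_of_lt_of_le (by linarith) (hx.trans hxy)
  have hyν : (0:ℝ) < y ^ ν := Real.rpow_pos_of_pos hy0 ν
  have habs : ∀ t ∈ Icc x y, |t ^ ν * f t| = t ^ ν * |f t| := by
    intro t ht
    have ht0 : (0:ℝ) ≤ t := by have := ht.1; nlinarith
    rw [abs_mul, abs_of_nonneg (Real.rpow_nonneg ht0 ν)]
  have hsup : sSup ((fun t => |t ^ ν * f t|) '' Icc x y) = y ^ ν * |f y| := by
    apply IsGreatest.csSup_eq
    constructor
    · exact ⟨y, ⟨hxy, le_refl y⟩, habs y ⟨hxy, le_refl y⟩⟩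
    · rintro v ⟨t, ht, rfl⟩
      show |t ^ ν * f t| ≤ y ^ ν * |f y|
      rw [habs t ht]
      have ht0 : (0:ℝ) ≤ t := by have := ht.1; nlinarith
      have h1 : t ^ ν ≤ y ^ ν := Real.rpow_le_rpow ht0 ht.2 hν
      have h2 : |f t| ≤ |f y| := hmax t ht
      nlinarith [abs_nonneg (f t), Real.rpow_nonneg ht0 ν]
  have hsup' : 0 < sSup ((fun t => |t ^ ν * f t|) '' Icc x y) := by
    rw [hsup]; positivity
  have key := hgood x y hx hxy hsup' (y ^ ν * η) (by positivity)
  simp only [hsup] at key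
  have hratio : (y ^ ν * η) / (y ^ ν * |f y|) = η / |f y| :=
    mul_div_mul_left η (|f y|) (ne_of_gt hyν)
  rw [hratio] at key
  refine le_trans (measure_mono ?_) key
  intro t ⟨ht, hft⟩
  refine ⟨ht, ?_⟩
  rw [habs t ht]
  have ht0 : (0:ℝ) ≤ t := by have := ht.1; nlinarith
  have h1 : t ^ ν ≤ y ^ ν := Real.rpow_le_rpow ht0 ht.2 hν
  nlinarith [abs_nonneg (f t), Real.rpow_nonneg ht0 ν]
end

section
/- Let h : (0,∞) → ℝ be a differentiable function such that h′(t) → 1 as t → ∞, and let F : ℝ → ℝ be bounded and continuous. Then (1/T)·∫₀^T (F(h(t)) − F(t)) dt → 0 as T → ∞. -/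
open Filter Topology MeasureTheory intervalIntegral

private lemma bdd_II {f : ℝ → ℝ} {a b C : ℝ} (hab : a ≤ b)
    (hmeas : AEStronglyMeasurable f (volume.restrict (Set.Ioc a b)))
    (hbd : ∀ x ∈ Set.Ioc a b, |f x| ≤ C) :
    IntervalIntegrable f volume a b := by
  rw [intervalIntegrable_iff_integrableOn_Ioc_of_le hab]
  have hc : IntegrableOn (fun _ : ℝ => C) (Set.Ioc a b) volume :=
    integrableOn_const measure_Ioc_lt_top.ne (by simp)
  refine hc.mono' hmeas ?_
  filter_upwards [ae_restrict_mem measurableSet_Ioc] with x hx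
  simpa [Real.norm_eq_abs] using hbd x hx

/-- Let `h : (0,∞) → ℝ` be differentiable with `h′(t) → 1` as `t → ∞`,
and let `F : ℝ → ℝ` be bounded and continuous. Then
`(1/T)·∫₀^T (F(h(t)) − F(t)) dt → 0` as `T → ∞`. -/
theorem average_difference_tendsto_zero
    (h : ℝ → ℝ) (hdiff : ∀ t : ℝ, 0 < t → DifferentiableAt ℝ h t)
    (hderiv : Tendsto (deriv h) atTop (𝓝 1))
    (F : ℝ → ℝ) (hFcont : Continuous F) (hFbdd : ∃ M : ℝ, ∀ x, |F x| ≤ M) :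
    Tendsto (fun T : ℝ => (1 / T) * ∫ t in (0:ℝ)..T, (F (h t) - F t))
      atTop (𝓝 0) := by
  obtain ⟨M, hM⟩ := hFbdd
  have hM0 : 0 ≤ M := (abs_nonneg _).trans (hM 0)
  set G : ℝ → ℝ := fun x => ∫ t in (0:ℝ)..x, F t with hGdef
  have hFint : ∀ a b : ℝ, IntervalIntegrable F volume a b := fun a b =>
    hFcont.intervalIntegrable a b
  have hG : ∀ x : ℝ, HasDerivAt G (F x) x := fun x =>
    (hFcont.integral_hasStrictDerivAt 0 x).hasDerivAt
  have hcont : ContinuousOn h (Set.Ioi 0) := fun t ht =>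
    ((hdiff t ht).continuousAt).continuousWithinAt
  have hhm : AEStronglyMeasurable h (volume.restrict (Set.Ioi (0:ℝ))) :=
    hcont.aestronglyMeasurable measurableSet_Ioi
  have hFh_m : ∀ a b : ℝ, 0 ≤ a →
      AEStronglyMeasurable (fun t => F (h t)) (volume.restrict (Set.Ioc a b)) := by
    intro a b ha
    have hsub : Set.Ioc a b ⊆ Set.Ioi (0:ℝ) := fun x hx => lt_of_le_of_lt ha hx.1
    exact (hFcont.comp_aestronglyMeasurable hhm).mono_measure
      (Measure.restrict_mono hsub le_rfl)
  have hFh_int : ∀ a b : ℝ, 0 ≤ a → a ≤ b →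
      IntervalIntegrable (fun t => F (h t)) volume a b := fun a b ha hab =>
    bdd_II hab (hFh_m a b ha) (fun x _ => hM _)
  rw [Metric.tendsto_nhds]
  intro ε hε
  set ε' : ℝ := ε / (4 * (M + 1)) with hε'def
  have hε' : 0 < ε' := by positivity
  have hε'eq : ε' * (4 * (M + 1)) = ε := by
    rw [hε'def]; field_simp
  have hev : ∀ᶠ s in atTop, dist (deriv h s) 1 < ε' := Metric.tendsto_nhds.1 hderiv ε' hε'
  rw [eventually_atTop] at hev
  obtain ⟨A₀, hA₀⟩ := hev
  set A : ℝ := max A₀ 1 with hAdef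
  have hApos : (0:ℝ) < A := lt_of_lt_of_le one_pos (le_max_right A₀ 1)
  have hd : ∀ s : ℝ, A ≤ s → |deriv h s - 1| ≤ ε' := by
    intro s hs
    have := hA₀ s (le_trans (le_max_left A₀ 1) hs)
    rw [Real.dist_eq] at this
    exact this.le
  set K : ℝ := 2 * M * A + M * |h A - A| + |G (h A) - G A| with hKdef
  have hK0 : 0 ≤ K := by positivity
  have key : ∀ T : ℝ, A ≤ T →
      |∫ t in (0:ℝ)..T, (F (h t) - F t)| ≤ 2 * M * ε' * T + K := by
    intro T hT
    have hposIcc : ∀ x ∈ Set.uIcc A T, 0 < x := by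
      intro x hx
      rw [Set.uIcc_of_le hT] at hx
      exact lt_of_lt_of_le hApos hx.1
    have hdm : AEStronglyMeasurable (deriv h) (volume.restrict (Set.Ioc A T)) :=
      (measurable_deriv h).aestronglyMeasurable
    have hdI : IntervalIntegrable (deriv h) volume A T := by
      refine bdd_II (C := ε' + 1) hT hdm (fun x hx => ?_)
      have h1 := hd x hx.1.le
      calc |deriv h x| = |(deriv h x - 1) + 1| := by ring_nf
        _ ≤ |deriv h x - 1| + |(1:ℝ)| := abs_add_le _ _
        _ ≤ ε' + 1 := by simpa using h1
    have hftc_h : ∫ s in A..T, deriv h s = h T - h A :=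
      integral_eq_sub_of_hasDerivAt
        (fun x hx => (hdiff x (hposIcc x hx)).hasDerivAt) hdI
    have hbd_hT : |h T - T| ≤ |h A - A| + ε' * (T - A) := by
      have h1 : ∫ s in A..T, (deriv h s - 1) = (h T - h A) - (T - A) := by
        rw [intervalIntegral.integral_sub hdI (intervalIntegrable_const),
          hftc_h, intervalIntegral.integral_const]
        simp
      have h2 : |∫ s in A..T, (deriv h s - 1)| ≤ ε' * (T - A) := by
        have := intervalIntegral.norm_integral_le_of_norm_le_const
          (C := ε') (f := fun s => deriv h s - 1) (a := A) (b := T) ?_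
        · rw [Real.norm_eq_abs] at this
          calc |∫ s in A..T, (deriv h s - 1)| ≤ ε' * |T - A| := this
            _ = ε' * (T - A) := by rw [abs_of_nonneg (by linarith)]
        · intro x hx
          rw [Set.uIoc_of_le hT] at hx
          simpa [Real.norm_eq_abs] using hd x hx.1.le
      have h3 : h T - T = (h A - A) + ((h T - h A) - (T - A)) := by ring
      calc |h T - T| = |(h A - A) + ((h T - h A) - (T - A))| := by rw [← h3]
        _ ≤ |h A - A| + |(h T - h A) - (T - A)| := abs_add_le _ _
        _ ≤ |h A - A| + ε' * (T - A) := by rw [← h1]; linarith [h2]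
    have hprod_I : IntervalIntegrable (fun s => F (h s) * deriv h s) volume A T := by
      refine bdd_II (C := M * (ε' + 1)) hT ((hFh_m A T hApos.le).mul hdm) (fun x hx => ?_)
      rw [abs_mul]
      have h1 := hd x hx.1.le
      have h2 : |deriv h x| ≤ ε' + 1 := by
        calc |deriv h x| = |(deriv h x - 1) + 1| := by ring_nf
          _ ≤ |deriv h x - 1| + |(1:ℝ)| := abs_add_le _ _
          _ ≤ ε' + 1 := by simpa using h1
      exact mul_le_mul (hM _) h2 (abs_nonneg _) hM0
    have hftc_Gh : ∫ s in A..T, F (h s) * deriv h s = G (h T) - G (h A) := by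
      refine integral_eq_sub_of_hasDerivAt (f := fun t => G (h t)) (fun x hx => ?_) hprod_I
      exact (hG (h x)).comp x (hdiff x (hposIcc x hx)).hasDerivAt
    have hI1 : IntervalIntegrable (fun s => F (h s) * (1 - deriv h s)) volume A T := by
      have := (hFh_int A T hApos.le hT).sub hprod_I
      have heq : (fun s => F (h s) - F (h s) * deriv h s)
          = fun s => F (h s) * (1 - deriv h s) := by funext s; ring
      rwa [heq] at this
    have hsplit : ∫ s in A..T, (F (h s) - F s)
        = (∫ s in A..T, F (h s) * (1 - deriv h s)) + (G (h T) - G T) - (G (h A) - G A) := by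
      have e1 : G T - G A = ∫ s in A..T, F s :=
        integral_interval_sub_left (hFint 0 T) (hFint 0 A)
      have e2 : ∫ s in A..T, (F (h s) - F s)
          = (∫ s in A..T, F (h s)) - ∫ s in A..T, F s :=
        intervalIntegral.integral_sub (hFh_int A T hApos.le hT) (hFint A T)
      have e3 : ∫ s in A..T, F (h s)
          = (∫ s in A..T, F (h s) * (1 - deriv h s)) + ∫ s in A..T, F (h s) * deriv h s := by
        rw [← intervalIntegral.integral_add hI1 hprod_I]
        congr 1; funext s; ring
      rw [e2, e3, hftc_Gh, ← e1]; ring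
    have hJ1 : |∫ s in A..T, F (h s) * (1 - deriv h s)| ≤ M * ε' * (T - A) := by
      have := intervalIntegral.norm_integral_le_of_norm_le_const
        (C := M * ε') (f := fun s => F (h s) * (1 - deriv h s)) (a := A) (b := T) ?_
      · rw [Real.norm_eq_abs] at this
        calc |∫ s in A..T, F (h s) * (1 - deriv h s)| ≤ M * ε' * |T - A| := this
          _ = M * ε' * (T - A) := by rw [abs_of_nonneg (by linarith)]
      · intro x hx
        rw [Set.uIoc_of_le hT] at hx
        rw [Real.norm_eq_abs, abs_mul, abs_sub_comm]
        exact mul_le_mul (hM _) (hd x hx.1.le) (abs_nonneg _) hM0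
    have hGhT : |G (h T) - G T| ≤ M * |h T - T| := by
      have e : G (h T) - G T = ∫ s in T..(h T), F s :=
        integral_interval_sub_left (hFint 0 (h T)) (hFint 0 T)
      rw [e]
      have := intervalIntegral.norm_integral_le_of_norm_le_const
        (C := M) (f := F) (a := T) (b := h T) (fun x _ => by
          simpa [Real.norm_eq_abs] using hM x)
      simpa [Real.norm_eq_abs, abs_sub_comm] using this
    have h0A : |∫ t in (0:ℝ)..A, (F (h t) - F t)| ≤ 2 * M * A := by
      have := intervalIntegral.norm_integral_le_of_norm_le_const
        (C := 2 * M) (f := fun t => F (h t) - F t) (a := (0:ℝ)) (b := A) (fun x _ => by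
          rw [Real.norm_eq_abs]
          calc |F (h x) - F x| ≤ |F (h x)| + |F x| := abs_sub _ _
            _ ≤ 2 * M := by linarith [hM (h x), hM x])
      rw [Real.norm_eq_abs] at this
      calc |∫ t in (0:ℝ)..A, (F (h t) - F t)| ≤ 2 * M * |A - 0| := this
        _ = 2 * M * A := by rw [sub_zero, abs_of_nonneg hApos.le]
    have hsum : ∫ t in (0:ℝ)..T, (F (h t) - F t)
        = (∫ t in (0:ℝ)..A, (F (h t) - F t)) + ∫ t in A..T, (F (h t) - F t) :=
      (integral_add_adjacent_intervals
        ((hFh_int 0 A le_rfl hApos.le).sub (hFint 0 A))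
        ((hFh_int A T hApos.le hT).sub (hFint A T))).symm
    have hAT : |∫ t in A..T, (F (h t) - F t)|
        ≤ M * ε' * (T - A) + (M * (|h A - A| + ε' * (T - A)) + |G (h A) - G A|) := by
      rw [hsplit]
      have hGT2 : |G (h T) - G T| ≤ M * (|h A - A| + ε' * (T - A)) :=
        le_trans hGhT (by
          have := hbd_hT
          nlinarith)
      calc |(∫ s in A..T, F (h s) * (1 - deriv h s)) + (G (h T) - G T) - (G (h A) - G A)|
          ≤ |(∫ s in A..T, F (h s) * (1 - deriv h s)) + (G (h T) - G T)| + |G (h A) - G A| :=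
            abs_sub _ _
        _ ≤ |∫ s in A..T, F (h s) * (1 - deriv h s)| + |G (h T) - G T| + |G (h A) - G A| := by
            linarith [abs_add_le (∫ s in A..T, F (h s) * (1 - deriv h s)) (G (h T) - G T)]
        _ ≤ _ := by linarith [hJ1, hGT2]
    calc |∫ t in (0:ℝ)..T, (F (h t) - F t)|
        ≤ |∫ t in (0:ℝ)..A, (F (h t) - F t)| + |∫ t in A..T, (F (h t) - F t)| := by
          rw [hsum]; exact abs_add_le _ _
      _ ≤ 2 * M * A + (M * ε' * (T - A) + (M * (|h A - A| + ε' * (T - A)) + |G (h A) - G A|)) := by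
          linarith [h0A, hAT]
      _ ≤ 2 * M * ε' * T + K := by
          rw [hKdef]
          nlinarith [mul_nonneg hM0 hε'.le, hApos, mul_nonneg (mul_nonneg hM0 hε'.le) hApos.le]
  filter_upwards [eventually_ge_atTop A, eventually_ge_atTop (1:ℝ),
    eventually_gt_atTop (2 * K / ε)] with T hTA hT1 hTK
  rw [Real.dist_eq, sub_zero]
  have hT0 : (0:ℝ) < T := lt_of_lt_of_le one_pos hT1
  have h1 : |1 / T * ∫ t in (0:ℝ)..T, (F (h t) - F t)|
      = (1 / T) * |∫ t in (0:ℝ)..T, (F (h t) - F t)| := by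
    rw [abs_mul, abs_of_pos (by positivity)]
  rw [h1]
  have h2 : (1 / T) * |∫ t in (0:ℝ)..T, (F (h t) - F t)|
      ≤ (1 / T) * (2 * M * ε' * T + K) := by
    apply mul_le_mul_of_nonneg_left (key T hTA) (by positivity)
  have h3 : (1 / T) * (2 * M * ε' * T + K) = 2 * M * ε' + K / T := by
    field_simp
  have h4 : 2 * M * ε' < ε / 2 := by nlinarith
  have h5 : K / T < ε / 2 := by
    rw [div_lt_iff₀ hT0]
    rw [div_lt_iff₀ hε] at hTK
    linarith
  calc (1 / T) * |∫ t in (0:ℝ)..T, (F (h t) - F t)| ≤ 2 * M * ε' + K / T := by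
        rw [← h3]; exact h2
    _ < ε := by linarith
end

section
/- Let n ≥ 2, let Γ be a discrete subgroup of SL(n,ℝ), and let X = SL(n,ℝ)/Γ be the quotient space with the quotient topology, on which SL(n,ℝ) acts by left translations. Let φ : [0,∞) → SL(n,ℝ) be continuous, let h : (0,∞) → (0,∞) be differentiable with h′(t) → 1 as t → ∞, and suppose there exists ρ ∈ SL(n,ℝ) such that φ(h(t))·φ(t)⁻¹ → ρ as t → ∞. Then for every continuous compactly supported function f : X → ℝ and every x ∈ X, (1/T)·∫₀^T ( f(ρ·φ(t)·x) − f(φ(t)·x) ) dt → 0 as T → ∞. -/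
open Filter Topology Matrix

/-- The matrix topology on `SL(n,ℝ)`, i.e. the subspace topology induced from `n×n` matrices. -/
instance specialLinearGroupTopology (n : ℕ) :
    TopologicalSpace (Matrix.SpecialLinearGroup (Fin n) ℝ) :=
  TopologicalSpace.induced
    (fun g => (g : Matrix (Fin n) (Fin n) ℝ)) inferInstance

namespace SLAux

variable (n : ℕ)

abbrev G (n : ℕ) := Matrix.SpecialLinearGroup (Fin n) ℝ

lemma continuous_coe : Continuous (fun g : G n => (g : Matrix (Fin n) (Fin n) ℝ)) :=
  continuous_induced_dom

lemma isEmbedding_coe : IsEmbedding (fun g : G n => (g : Matrix (Fin n) (Fin n) ℝ)) :=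
  ⟨⟨rfl⟩, Subtype.coe_injective⟩

instance : IsTopologicalGroup (G n) where
  continuous_mul := by
    apply continuous_induced_rng.2
    show Continuous fun p : G n × G n =>
      ((p.1 : Matrix (Fin n) (Fin n) ℝ) * (p.2 : Matrix (Fin n) (Fin n) ℝ))
    exact ((continuous_coe n).comp continuous_fst).matrix_mul
      ((continuous_coe n).comp continuous_snd)
  continuous_inv := by
    apply continuous_induced_rng.2
    show Continuous fun g : G n => (g : Matrix (Fin n) (Fin n) ℝ).adjugate
    exact (continuous_coe n).matrix_adjugate

instance : T2Space (G n) := (isEmbedding_coe n).t2Space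

lemma isClosedEmbedding_coe :
    IsClosedEmbedding (fun g : G n => (g : Matrix (Fin n) (Fin n) ℝ)) := by
  refine ⟨isEmbedding_coe n, ?_⟩
  have : Set.range (fun g : G n => (g : Matrix (Fin n) (Fin n) ℝ))
      = {A : Matrix (Fin n) (Fin n) ℝ | A.det = 1} := by
    ext A
    constructor
    · rintro ⟨g, rfl⟩; exact g.2
    · intro hA; exact ⟨⟨A, hA⟩, rfl⟩
  rw [this]
  exact isClosed_eq (continuous_id.matrix_det) continuous_const

instance : LocallyCompactSpace (G n) :=
  haveI : LocallyCompactSpace (Matrix (Fin n) (Fin n) ℝ) :=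
    inferInstanceAs (LocallyCompactSpace (Fin n → Fin n → ℝ))
  (isClosedEmbedding_coe n).locallyCompactSpace

/-- Uniform smallness of `f (g • y) - f (ρ • y)` for `g` near `ρ`, for `f` continuous
with compact support on the quotient. -/
lemma uniform_small {n : ℕ} (Γ : Subgroup (G n)) (f : G n ⧸ Γ → ℝ)
    (hf : Continuous f) (hfc : HasCompactSupport f) (ρ : G n) {ε : ℝ} (hε : 0 < ε) :
    ∃ U ∈ 𝓝 ρ, ∀ g ∈ U, ∀ y : G n ⧸ Γ, |f (g • y) - f (ρ • y)| < ε := by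
  obtain ⟨K, hKc, hKn⟩ := exists_compact_mem_nhds ρ
  have hρK : ρ ∈ K := mem_of_mem_nhds hKn
  have hSc : IsCompact (tsupport f) := hfc
  set C : Set (G n ⧸ Γ) :=
    (fun p : G n × (G n ⧸ Γ) => p.1 • p.2) '' ((K⁻¹) ×ˢ tsupport f) with hC
  have hCc : IsCompact C := ((hKc.inv).prod hSc).image continuous_smul
  have hzero : ∀ g ∈ K, ∀ y : G n ⧸ Γ, y ∉ C → f (g • y) = 0 := by
    intro g hg y hy
    apply image_eq_zero_of_notMem_tsupport
    intro hmem
    exact hy ⟨(g⁻¹, g • y), ⟨Set.inv_mem_inv.2 hg, hmem⟩, by simp⟩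
  set Φ : G n × (G n ⧸ Γ) → ℝ := fun p => f (p.1 • p.2) - f (ρ • p.2) with hΦdef
  have hΦ : Continuous Φ :=
    (hf.comp (continuous_fst.smul continuous_snd)).sub
      (hf.comp ((continuous_const_smul ρ).comp continuous_snd))
  set Z := (K ×ˢ C) ∩ {p | ε ≤ |Φ p|} with hZ
  have hZc : IsCompact Z :=
    (hKc.prod hCc).inter_right (isClosed_le continuous_const hΦ.abs)
  have hP : IsClosed (Prod.fst '' Z) := (hZc.image continuous_fst).isClosed
  have hρP : ρ ∉ Prod.fst '' Z := by
    rintro ⟨⟨g, y⟩, ⟨hgy, hge⟩, rfl⟩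
    simp only [hΦdef, Set.mem_setOf_eq, sub_self, abs_zero] at hge
    linarith
  refine ⟨interior K ∩ (Prod.fst '' Z)ᶜ,
    Filter.inter_mem (interior_mem_nhds.2 hKn) (hP.isOpen_compl.mem_nhds hρP), ?_⟩
  rintro g ⟨hgK, hgP⟩ y
  by_cases hyC : y ∈ C
  · by_contra hcon
    push_neg at hcon
    exact hgP ⟨(g, y), ⟨⟨interior_subset hgK, hyC⟩, hcon⟩, rfl⟩
  · rw [hzero g (interior_subset hgK) y hyC, hzero ρ hρK y hyC]
    simpa using hε

/-- Cesàro-type helper: if `|g T| ≤ C + ε T` eventually, for every `ε`, then `g T / T → 0`. -/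
lemma cesaro_aux (g : ℝ → ℝ)
    (H : ∀ ε : ℝ, 0 < ε → ∃ C : ℝ, ∀ᶠ T in atTop, |g T| ≤ C + ε * T) :
    Tendsto (fun T => (1 / T) * g T) atTop (𝓝 0) := by
  rw [NormedAddCommGroup.tendsto_nhds_zero]
  intro ε hε
  obtain ⟨C, hC⟩ := H (ε / 2) (by positivity)
  filter_upwards [hC, eventually_gt_atTop (max (2 * |C| / ε + 1) 0)] with T h1 h2
  have hT : 0 < T := lt_of_le_of_lt (le_max_right _ _) h2
  have hT' : 2 * |C| / ε + 1 < T := lt_of_le_of_lt (le_max_left _ _) h2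
  have hCb : |C| < ε / 2 * T := by
    have h3 : 2 * |C| / ε < T := by linarith
    have := (div_lt_iff₀ hε).1 h3
    linarith
  have h4 : |g T| ≤ |C| + ε / 2 * T := le_trans h1 (by linarith [le_abs_self C])
  rw [Real.norm_eq_abs, abs_mul, abs_of_pos (one_div_pos.2 hT)]
  have h5 : (1 / T) * |g T| ≤ (1 / T) * (|C| + ε / 2 * T) := by
    apply mul_le_mul_of_nonneg_left h4 (by positivity)
  have h6 : (1 / T) * (|C| + ε / 2 * T) < (1 / T) * (ε / 2 * T + ε / 2 * T) := by
    apply mul_lt_mul_of_pos_left (by linarith) (by positivity)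
  have h7 : (1 / T) * (ε / 2 * T + ε / 2 * T) = ε := by
    field_simp
    norm_num
  linarith

end SLAux

open SLAux MeasureTheory intervalIntegral

set_option maxHeartbeats 2000000 in
/-- Let `Γ` be a discrete subgroup of `SL(n,ℝ)` and `X = SL(n,ℝ)/Γ` with the
quotient topology, on which `SL(n,ℝ)` acts by left translations. Let `φ : [0,∞) → SL(n,ℝ)`
be continuous, `h : (0,∞) → (0,∞)` differentiable with `h′(t) → 1` as `t → ∞`, and suppose
`φ(h(t))·φ(t)⁻¹ → ρ` for some `ρ ∈ SL(n,ℝ)`. Then for every continuous compactly supported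
`f : X → ℝ` and every `x ∈ X`,
`(1/T)·∫₀^T (f(ρ·φ(t)·x) − f(φ(t)·x)) dt → 0` as `T → ∞`. -/
theorem average_invariance_under_limit_element
    (n : ℕ) (hn : 2 ≤ n)
    (Γ : Subgroup (Matrix.SpecialLinearGroup (Fin n) ℝ))
    (hΓ : DiscreteTopology Γ)
    (φ : ℝ → Matrix.SpecialLinearGroup (Fin n) ℝ)
    (hφ : ContinuousOn φ (Set.Ici (0:ℝ)))
    (h : ℝ → ℝ) (hpos : ∀ t : ℝ, 0 < t → 0 < h t)
    (hdiff : ∀ t : ℝ, 0 < t → DifferentiableAt ℝ h t)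
    (hderiv : Tendsto (deriv h) atTop (𝓝 1))
    (ρ : Matrix.SpecialLinearGroup (Fin n) ℝ)
    (hρ : Tendsto (fun t => φ (h t) * (φ t)⁻¹) atTop (𝓝 ρ))
    (f : Matrix.SpecialLinearGroup (Fin n) ℝ ⧸ Γ → ℝ)
    (hf : Continuous f) (hfc : HasCompactSupport f)
    (x : Matrix.SpecialLinearGroup (Fin n) ℝ ⧸ Γ) :
    Tendsto (fun T : ℝ =>
        (1 / T) * ∫ t in (0:ℝ)..T, (f (ρ • φ t • x) - f (φ t • x)))
      atTop (𝓝 0) := by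
  classical
  -- global bound on f
  obtain ⟨M₀, hM₀⟩ := hfc.exists_bound_of_continuous hf
  set M : ℝ := max M₀ 0 with hMdef
  have hM : ∀ y, |f y| ≤ M := fun y => le_trans (by simpa [Real.norm_eq_abs] using hM₀ y)
    (le_max_left _ _)
  have hM0 : 0 ≤ M := le_max_right _ _
  -- notation
  set F : ℝ → ℝ := fun t => f (φ t • x) with hFdef
  set w : ℝ → ℝ := fun t => f (ρ • φ t • x) - f (φ t • x) with hwdef
  -- continuity facts
  have hcx : Continuous fun g : G n => g • x := continuous_id.smul continuous_const
  have hFcont : ContinuousOn F (Set.Ici 0) := hf.comp_continuousOn (hcx.comp_continuousOn hφ)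
  have hcρ : Continuous fun g : G n => f (ρ • g • x) :=
    hf.comp ((continuous_const_smul ρ).comp hcx)
  have hwcont : ContinuousOn w (Set.Ici 0) :=
    (hcρ.comp_continuousOn hφ).sub hFcont
  have hFM : ∀ t, |F t| ≤ M := fun t => hM _
  -- apply the Cesàro helper
  apply cesaro_aux
  intro ε hε
  set ε₁ : ℝ := ε / (2 + 4 * M) with hε₁def
  have hε₁ : 0 < ε₁ := by positivity
  -- the uniform neighbourhood from compact support
  obtain ⟨U, hUn, hU⟩ := uniform_small Γ f hf hfc ρ hε₁
  -- eventual facts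
  have hev1 : ∀ᶠ t in atTop, |deriv h t - 1| ≤ ε₁ := by
    have := hderiv (Metric.closedBall_mem_nhds (1:ℝ) hε₁)
    filter_upwards [this] with t ht
    simpa [Real.dist_eq] using Metric.mem_closedBall.1 ht
  have hev2 : ∀ᶠ t in atTop, (φ (h t) * (φ t)⁻¹) ∈ U := hρ hUn
  obtain ⟨a₀, ha₀⟩ := eventually_atTop.1 (hev1.and hev2)
  set a : ℝ := max a₀ 1 with hadef
  have ha1 : (1:ℝ) ≤ a := le_max_right _ _
  have ha0 : (0:ℝ) < a := lt_of_lt_of_le one_pos ha1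
  have hkey : ∀ t, a ≤ t → |deriv h t - 1| ≤ ε₁ ∧ (φ (h t) * (φ t)⁻¹) ∈ U :=
    fun t ht => ha₀ t (le_trans (le_max_left _ _) ht)
  -- pointwise smallness of u on [a, ∞)
  have hu : ∀ t, a ≤ t → |f (ρ • φ t • x) - F (h t)| ≤ ε₁ := by
    intro t ht
    have h2 := hU _ (hkey t ht).2 (φ t • x)
    have h3 : (φ (h t) * (φ t)⁻¹) • (φ t • x) = φ (h t) • x := by
      rw [smul_smul, inv_mul_cancel_right]
    rw [h3] at h2
    rw [abs_sub_comm]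
    exact le_of_lt h2
  -- the constant
  refine ⟨|∫ t in (0:ℝ)..a, w t| + 2 * M * |h a - a|, ?_⟩
  filter_upwards [eventually_ge_atTop a] with T hT
  have hT0 : 0 < T := lt_of_lt_of_le ha0 hT
  -- derivative facts on [a, T]
  have hd : ∀ t ∈ Set.uIcc a T, HasDerivAt h (deriv h t) t := by
    intro t ht
    rw [Set.uIcc_of_le hT] at ht
    exact (hdiff t (lt_of_lt_of_le ha0 ht.1)).hasDerivAt
  have hd' : ∀ t ∈ Set.Icc a T, |deriv h t| ≤ 1 + ε₁ := by
    intro t ht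
    obtain ⟨hl, hr⟩ := abs_le.1 (hkey t ht.1).1
    exact abs_le.2 ⟨by linarith, by linarith⟩
  -- continuity of h on [a, T]
  have hhc : ContinuousOn h (Set.uIcc a T) := fun t ht =>
    ((hdiff t (by rw [Set.uIcc_of_le hT] at ht; exact lt_of_lt_of_le ha0 ht.1)).continuousAt).continuousWithinAt
  have himage : ∀ t ∈ Set.uIcc a T, h t ∈ Set.Ici (0:ℝ) := by
    intro t ht
    rw [Set.uIcc_of_le hT] at ht
    exact le_of_lt (hpos t (lt_of_lt_of_le ha0 ht.1))
  -- interval integrability of various functions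
  have hwint : ∀ b c : ℝ, 0 ≤ b → 0 ≤ c → IntervalIntegrable w volume b c := by
    intro b c hb hc
    apply (hwcont.mono ?_).intervalIntegrable
    intro t ht
    rcases le_total b c with hbc | hbc
    · rw [Set.uIcc_of_le hbc] at ht; exact le_trans hb ht.1
    · rw [Set.uIcc_of_ge hbc] at ht; exact le_trans hc ht.1
  have hFint : ∀ b c : ℝ, 0 ≤ b → 0 ≤ c → IntervalIntegrable F volume b c := by
    intro b c hb hc
    apply (hFcont.mono ?_).intervalIntegrable
    intro t ht
    rcases le_total b c with hbc | hbc
    · rw [Set.uIcc_of_le hbc] at ht; exact le_trans hb ht.1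
    · rw [Set.uIcc_of_ge hbc] at ht; exact le_trans hc ht.1
  have hFhcont : ContinuousOn (fun t => F (h t)) (Set.uIcc a T) :=
    hFcont.comp hhc himage
  have hFhint : IntervalIntegrable (fun t => F (h t)) volume a T :=
    hFhcont.intervalIntegrable
  have huint : IntervalIntegrable (fun t => f (ρ • φ t • x) - F (h t)) volume a T := by
    have : IntervalIntegrable (fun t => f (ρ • φ t • x)) volume a T := by
      apply ((hcρ.comp_continuousOn hφ).mono ?_).intervalIntegrable
      rw [Set.uIcc_of_le hT]
      exact fun t ht => le_trans (le_of_lt ha0) ht.1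
    exact this.sub hFhint
  have hderivint : IntervalIntegrable (deriv h) volume a T := by
    rw [intervalIntegrable_iff_integrableOn_Ioc_of_le hT]
    apply Integrable.mono' (g := fun _ => 1 + ε₁)
      (integrableOn_const measure_Ioc_lt_top.ne)
    · exact (measurable_deriv h).aestronglyMeasurable.restrict
    · rw [ae_restrict_iff' measurableSet_Ioc]
      filter_upwards with t ht
      exact (Real.norm_eq_abs _) ▸ hd' t ⟨le_of_lt ht.1, ht.2⟩
  -- change of variables
  have hsubst : (∫ t in a..T, deriv h t • F (h t)) = ∫ s in h a..h T, F s := by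
    have hmin : min a T = a := min_eq_left hT
    have hmax : max a T = T := max_eq_right hT
    have key := integral_comp_smul_deriv''' (f := h) (f' := deriv h) (g := F) (a := a) (b := T)
      hhc ?_ ?_ ?_ ?_
    · simpa [Function.comp] using key
    · intro t ht
      rw [hmin, hmax] at ht
      exact (hd t (by rw [Set.uIcc_of_le hT]; exact ⟨le_of_lt ht.1, le_of_lt ht.2⟩)).hasDerivWithinAt
    · apply hFcont.mono
      rintro s ⟨t, ht, rfl⟩
      rw [hmin, hmax] at ht
      exact himage t (by rw [Set.uIcc_of_le hT]; exact ⟨le_of_lt ht.1, le_of_lt ht.2⟩)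
    · apply ContinuousOn.integrableOn_compact (hhc.image_uIcc ▸ isCompact_uIcc.image_of_continuousOn hhc)
      apply hFcont.mono
      rintro s ⟨t, ht, rfl⟩
      exact himage t ht
    · apply Integrable.mono' (g := fun _ => (1 + ε₁) * M)
        (integrableOn_const (by rw [Set.uIcc_of_le hT]; exact measure_Icc_lt_top.ne))
      · exact ((measurable_deriv h).aestronglyMeasurable.restrict).smul
          (hFhcont.aestronglyMeasurable measurableSet_uIcc)
      · rw [ae_restrict_iff' measurableSet_uIcc]
        filter_upwards with t ht
        rw [Real.norm_eq_abs, smul_eq_mul, abs_mul]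
        have h1 : |deriv h t| ≤ 1 + ε₁ := hd' t (by rwa [Set.uIcc_of_le hT] at ht)
        exact mul_le_mul h1 (hFM _) (abs_nonneg _) (by linarith)
  -- FTC for h
  have hftc : (∫ t in a..T, deriv h t) = h T - h a :=
    integral_eq_sub_of_hasDerivAt hd hderivint
  -- bound on |h T - T|
  have hhTbound : |h T - T| ≤ |h a - a| + ε₁ * (T - a) := by
    have h1 : (∫ t in a..T, (deriv h t - 1)) = (h T - h a) - (T - a) := by
      rw [integral_sub hderivint intervalIntegrable_const, hftc]
      simp
    have h2 : |∫ t in a..T, (deriv h t - 1)| ≤ ε₁ * |T - a| := by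
      rw [← Real.norm_eq_abs]
      apply intervalIntegral.norm_integral_le_of_norm_le_const
      intro t ht
      rw [Set.uIoc_of_le hT] at ht
      exact (Real.norm_eq_abs _) ▸ (hkey t (le_of_lt ht.1)).1
    rw [h1, abs_of_nonneg (by linarith : (0:ℝ) ≤ T - a)] at h2
    calc |h T - T| = |(h a - a) + ((h T - h a) - (T - a))| := by ring_nf
      _ ≤ |h a - a| + |(h T - h a) - (T - a)| := abs_add_le _ _
      _ ≤ |h a - a| + ε₁ * (T - a) := by linarith
  -- split the integral
  have hsplit : (∫ t in (0:ℝ)..T, w t) = (∫ t in (0:ℝ)..a, w t) + ∫ t in a..T, w t :=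
    (integral_add_adjacent_intervals (hwint 0 a le_rfl (le_of_lt ha0))
      (hwint a T (le_of_lt ha0) (le_of_lt hT0))).symm
  -- split the [a,T] part
  have hsplit2 : (∫ t in a..T, w t)
      = (∫ t in a..T, (f (ρ • φ t • x) - F (h t))) + ∫ t in a..T, (F (h t) - F t) := by
    rw [← integral_add huint (hFhint.sub (hFint a T (le_of_lt ha0) (le_of_lt hT0)))]
    apply integral_congr
    intro t ht
    simp only [hwdef, hFdef]
    ring
  -- bound the first piece
  have hbound1 : |∫ t in a..T, (f (ρ • φ t • x) - F (h t))| ≤ ε₁ * (T - a) := by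
    have := intervalIntegral.norm_integral_le_of_norm_le_const (C := ε₁)
      (f := fun t => f (ρ • φ t • x) - F (h t)) (a := a) (b := T) ?_
    · rwa [Real.norm_eq_abs, abs_of_nonneg (by linarith : (0:ℝ) ≤ T - a)] at this
    · intro t ht
      rw [Set.uIoc_of_le hT] at ht
      exact (Real.norm_eq_abs _) ▸ hu t (le_of_lt ht.1)
  -- decompose the second piece
  have hFh_decomp : (∫ t in a..T, F (h t))
      = (∫ t in a..T, deriv h t • F (h t)) + ∫ t in a..T, ((1 - deriv h t) * F (h t)) := by
    have hint1 : IntervalIntegrable (fun t => deriv h t • F (h t)) volume a T := by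
      rw [intervalIntegrable_iff_integrableOn_Ioc_of_le hT]
      apply Integrable.mono' (g := fun _ => (1 + ε₁) * M)
        (integrableOn_const measure_Ioc_lt_top.ne)
      · exact ((measurable_deriv h).aestronglyMeasurable.restrict).smul
          ((hFhcont.mono (by rw [Set.uIcc_of_le hT]; exact Set.Ioc_subset_Icc_self)).aestronglyMeasurable
            measurableSet_Ioc)
      · rw [ae_restrict_iff' measurableSet_Ioc]
        filter_upwards with t ht
        rw [Real.norm_eq_abs, smul_eq_mul, abs_mul]
        exact mul_le_mul (hd' t ⟨le_of_lt ht.1, ht.2⟩) (hFM _) (abs_nonneg _) (by linarith)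
    have hint2 : IntervalIntegrable (fun t => (1 - deriv h t) * F (h t)) volume a T := by
      have : (fun t => (1 - deriv h t) * F (h t))
          = fun t => F (h t) - deriv h t • F (h t) := by
        funext t; simp [smul_eq_mul]; ring
      rw [this]
      exact hFhint.sub hint1
    rw [← integral_add hint1 hint2]
    apply integral_congr
    intro t ht
    simp [smul_eq_mul]
    ring
  have hadj : (∫ s in h a..h T, F s)
      = (∫ s in h a..a, F s) + ((∫ s in a..T, F s) + ∫ s in T..h T, F s) := by
    have hha : 0 ≤ h a := le_of_lt (hpos a ha0)
    have hhT : 0 ≤ h T := le_of_lt (hpos T hT0)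
    rw [integral_add_adjacent_intervals (hFint a T (le_of_lt ha0) (le_of_lt hT0))
      (hFint T (h T) (le_of_lt hT0) hhT)]
    exact (integral_add_adjacent_intervals (hFint (h a) a hha (le_of_lt ha0))
      (hFint a (h T) (le_of_lt ha0) hhT)).symm
  -- bounds via the global bound M
  have hb2 : |∫ s in h a..a, F s| ≤ M * |a - h a| := by
    have := intervalIntegral.norm_integral_le_of_norm_le_const (C := M) (f := F) (a := h a) (b := a)
      (fun t _ => (Real.norm_eq_abs _) ▸ hFM t)
    rwa [Real.norm_eq_abs] at this
  have hb3 : |∫ s in T..h T, F s| ≤ M * |h T - T| := by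
    have := intervalIntegral.norm_integral_le_of_norm_le_const (C := M) (f := F) (a := T) (b := h T)
      (fun t _ => (Real.norm_eq_abs _) ▸ hFM t)
    rwa [Real.norm_eq_abs] at this
  have hb4 : |∫ t in a..T, ((1 - deriv h t) * F (h t))| ≤ (ε₁ * M) * (T - a) := by
    have := intervalIntegral.norm_integral_le_of_norm_le_const (C := ε₁ * M)
      (f := fun t => (1 - deriv h t) * F (h t)) (a := a) (b := T) ?_
    · rwa [Real.norm_eq_abs, abs_of_nonneg (by linarith : (0:ℝ) ≤ T - a)] at this
    · intro t ht
      rw [Set.uIoc_of_le hT] at ht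
      rw [Real.norm_eq_abs, abs_mul]
      have h1 : |1 - deriv h t| ≤ ε₁ := by
        rw [abs_sub_comm]
        exact (hkey t (le_of_lt ht.1)).1
      exact mul_le_mul h1 (hFM _) (abs_nonneg _) (le_of_lt hε₁)
  -- assemble
  have hsecond : |∫ t in a..T, (F (h t) - F t)| ≤ 2 * M * |h a - a| + 2 * ε₁ * M * (T - a) := by
    have heq : (∫ t in a..T, (F (h t) - F t))
        = (∫ s in h a..a, F s) + (∫ s in T..h T, F s)
          + ∫ t in a..T, ((1 - deriv h t) * F (h t)) := by
      rw [integral_sub hFhint (hFint a T (le_of_lt ha0) (le_of_lt hT0)), hFh_decomp, hsubst, hadj]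
      ring
    rw [heq]
    have e1 := abs_add_le ((∫ s in h a..a, F s) + ∫ s in T..h T, F s)
      (∫ t in a..T, ((1 - deriv h t) * F (h t)))
    have e2 := abs_add_le (∫ s in h a..a, F s) (∫ s in T..h T, F s)
    have e3 : M * |h T - T| ≤ M * (|h a - a| + ε₁ * (T - a)) :=
      mul_le_mul_of_nonneg_left hhTbound hM0
    have e4 : |a - h a| = |h a - a| := abs_sub_comm _ _
    nlinarith [hb2, hb3, hb4]
  -- final bound
  have hfinal : |∫ t in (0:ℝ)..T, w t|
      ≤ (|∫ t in (0:ℝ)..a, w t| + 2 * M * |h a - a|) + ε * T := by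
    rw [hsplit]
    have e0 := abs_add_le (∫ t in (0:ℝ)..a, w t) (∫ t in a..T, w t)
    have e1 : |∫ t in a..T, w t| ≤ ε₁ * (T - a) + (2 * M * |h a - a| + 2 * ε₁ * M * (T - a)) := by
      rw [hsplit2]
      have := abs_add_le (∫ t in a..T, (f (ρ • φ t • x) - F (h t))) (∫ t in a..T, (F (h t) - F t))
      linarith
    have e2 : ε₁ * (1 + 2 * M) = ε / 2 := by
      rw [hε₁def]
      field_simp
      ring
    have e3 : ε₁ * (T - a) + 2 * ε₁ * M * (T - a) = ε₁ * (1 + 2 * M) * (T - a) := by ring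
    have e4 : ε / 2 * (T - a) ≤ ε * T := by nlinarith
    nlinarith [e0, e1]
  exact hfinal
end

section
/- Let G be a Hausdorff topological group, let ξ : [0,∞) → G be a map, and for each s ∈ ℝ let h_s : [0,∞) → [0,∞) be a map such that h_s ∘ h_l = h_{s+l} for all s,l ∈ ℝ and h_l(t) → ∞ as t → ∞ for each l ∈ ℝ. Suppose that for each s ∈ ℝ there exists p(s) ∈ G such that ξ(h_s(t))·ξ(t)⁻¹ → p(s) as t → ∞. Then p(s+l) = p(s)·p(l) for all s,l ∈ ℝ; that is, p : ℝ → G is a group homomorphism from the additive reals to G. -/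
open Filter Topology

/-- Let `G` be a Hausdorff topological group, `ξ : [0,∞) → G`, and for each
`s ∈ ℝ` let `h_s : [0,∞) → [0,∞)` satisfy `h_s ∘ h_l = h_{s+l}` and `h_l(t) → ∞` as `t → ∞`.
If for each `s` there is `p(s) ∈ G` with `ξ(h_s(t))·ξ(t)⁻¹ → p(s)` as `t → ∞`, then
`p(s+l) = p(s)·p(l)` for all `s, l`; i.e. `p : ℝ → G` is a homomorphism from the additive
reals to `G`. -/
theorem limit_differences_form_homomorphism
    {G : Type*} [Group G] [TopologicalSpace G] [IsTopologicalGroup G] [T2Space G]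
    (ξ : ℝ → G) (h : ℝ → ℝ → ℝ) (p : ℝ → G)
    (hnonneg : ∀ s t : ℝ, 0 ≤ t → 0 ≤ h s t)
    (hcomp : ∀ s l t : ℝ, 0 ≤ t → h s (h l t) = h (s + l) t)
    (hinf : ∀ l : ℝ, Tendsto (h l) atTop atTop)
    (hlim : ∀ s : ℝ, Tendsto (fun t => ξ (h s t) * (ξ t)⁻¹) atTop (𝓝 (p s))) :
    ∀ s l : ℝ, p (s + l) = p s * p l := by
  intro s l
  have h1 : Tendsto (fun t => ξ (h s (h l t)) * (ξ (h l t))⁻¹) atTop (𝓝 (p s)) :=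
    (hlim s).comp (hinf l)
  have h2 : Tendsto (fun t => (ξ (h s (h l t)) * (ξ (h l t))⁻¹) *
      (ξ (h l t) * (ξ t)⁻¹)) atTop (𝓝 (p s * p l)) := h1.mul (hlim l)
  have h3 : Tendsto (fun t => ξ (h (s + l) t) * (ξ t)⁻¹) atTop (𝓝 (p s * p l)) := by
    refine h2.congr' ?_
    filter_upwards [eventually_ge_atTop (0:ℝ)] with t ht
    rw [hcomp s l t ht]
    group
  exact tendsto_nhds_unique (hlim (s + l)) h3
end

section
/- Let V be a nonzero finite-dimensional ℝ-linear subspace of the space of all functions [0,∞) → ℝ. Assume that every nonzero f ∈ V admits a degree, i.e., there exist r ∈ ℝ and c ≠ 0 such that f(t)/t^r → c as t → ∞. Then V has a basis F₁,…,F_N together with real numbers r₁ < r₂ < ⋯ < r_N and nonzero reals c₁,…,c_N such that F_i(t)/t^{r_i} → c_i as t → ∞ for each i. -/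
open Filter Topology

private lemma coe_tendsto_atTop :
    Tendsto (fun t : {t : ℝ // (0:ℝ) ≤ t} => (t : ℝ)) atTop atTop := by
  rw [tendsto_atTop]
  intro b
  filter_upwards [Filter.mem_atTop (⟨max b 0, le_max_right _ _⟩ : {t : ℝ // (0:ℝ) ≤ t})]
    with t ht
  exact (le_max_left b 0).trans ht

private lemma rpow_tendsto_zero {e : ℝ} (he : e < 0) :
    Tendsto (fun t : {t : ℝ // (0:ℝ) ≤ t} => (t:ℝ) ^ e) atTop (𝓝 0) := by
  have h := tendsto_rpow_neg_atTop (y := -e) (by linarith)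
  simp only [neg_neg] at h
  exact h.comp coe_tendsto_atTop

private lemma shift_tendsto {f : {t : ℝ // (0:ℝ) ≤ t} → ℝ} {r c : ℝ}
    (h : Tendsto (fun t : {t : ℝ // (0:ℝ) ≤ t} => f t / (t:ℝ) ^ r) atTop (𝓝 c))
    {x : ℝ} (hx : r < x) :
    Tendsto (fun t : {t : ℝ // (0:ℝ) ≤ t} => f t / (t:ℝ) ^ x) atTop (𝓝 0) := by
  have h2 := h.mul (rpow_tendsto_zero (show r - x < 0 by linarith))
  rw [mul_zero] at h2
  refine Tendsto.congr' ?_ h2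
  filter_upwards [coe_tendsto_atTop.eventually_ge_atTop 1] with t ht
  have ht0 : (0:ℝ) < (t:ℝ) := lt_of_lt_of_le one_pos ht
  have hr := (Real.rpow_pos_of_pos ht0 r).ne'
  have hxx := (Real.rpow_pos_of_pos ht0 x).ne'
  rw [Real.rpow_sub ht0, div_mul_div_comm, mul_comm ((t:ℝ) ^ r) ((t:ℝ) ^ x),
    mul_div_mul_right _ _ hr]

private lemma lt_of_deg {f : {t : ℝ // (0:ℝ) ≤ t} → ℝ} {r c x : ℝ} (hc : c ≠ 0)
    (h1 : Tendsto (fun t : {t : ℝ // (0:ℝ) ≤ t} => f t / (t:ℝ) ^ r) atTop (𝓝 c))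
    (h0 : Tendsto (fun t : {t : ℝ // (0:ℝ) ≤ t} => f t / (t:ℝ) ^ x) atTop (𝓝 0)) :
    r < x := by
  by_contra hle
  push_neg at hle
  rcases eq_or_lt_of_le hle with heq | hlt
  · exact hc (tendsto_nhds_unique (heq ▸ h1) h0)
  · exact hc (tendsto_nhds_unique h1 (shift_tendsto h0 hlt))

private lemma indep_of_distinct_deg {ι : Type} (f : ι → ({t : ℝ // (0:ℝ) ≤ t} → ℝ))
    (d : ι → ℝ) (hd : Function.Injective d) (c : ι → ℝ) (hc : ∀ i, c i ≠ 0)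
    (ht : ∀ i, Tendsto (fun t : {t : ℝ // (0:ℝ) ≤ t} => f i t / (t:ℝ) ^ (d i))
      atTop (𝓝 (c i))) :
    LinearIndependent ℝ f := by
  classical
  rw [linearIndependent_iff]
  intro l hl
  by_contra hne
  obtain ⟨j, hjs, hmax⟩ := l.support.exists_max_image d (Finsupp.support_nonempty_iff.mpr hne)
  have hzero : (fun t : {t : ℝ // (0:ℝ) ≤ t} =>
      ∑ i ∈ l.support, l i * (f i t / (t:ℝ) ^ (d j))) = fun _ => (0:ℝ) := by
    funext t
    have h0 : (Finsupp.linearCombination ℝ f l) t = 0 := by rw [hl]; rfl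
    rw [Finsupp.linearCombination_apply, Finsupp.sum] at h0
    simp only [Finset.sum_apply, Pi.smul_apply, smul_eq_mul] at h0
    have : ∑ i ∈ l.support, l i * (f i t / (t:ℝ) ^ (d j))
        = (∑ i ∈ l.support, l i * f i t) / (t:ℝ) ^ (d j) := by
      rw [Finset.sum_div]
      exact Finset.sum_congr rfl fun i _ => (mul_div_assoc _ _ _).symm
    rw [this, h0, zero_div]
  have hlim : Tendsto (fun t : {t : ℝ // (0:ℝ) ≤ t} =>
      ∑ i ∈ l.support, l i * (f i t / (t:ℝ) ^ (d j))) atTop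
      (𝓝 (∑ i ∈ l.support, (if i = j then l j * c j else 0))) := by
    refine tendsto_finset_sum _ fun i hi => ?_
    by_cases hij : i = j
    · subst hij
      simp only [if_pos rfl]
      exact (ht i).const_mul _
    · simp only [if_neg hij]
      have hlt : d i < d j := lt_of_le_of_ne (hmax i hi) (fun h => hij (hd h))
      have := (shift_tendsto (ht i) hlt).const_mul (l i)
      rwa [mul_zero] at this
  rw [Finset.sum_ite_eq' l.support j, if_pos hjs] at hlim
  rw [hzero] at hlim
  have := tendsto_nhds_unique hlim tendsto_const_nhds
  rcases mul_eq_zero.mp this with h | h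
  · exact Finsupp.mem_support_iff.mp hjs h
  · exact hc j h

/-- Let `V` be a nonzero finite-dimensional subspace of the space of all
functions `[0,∞) → ℝ` such that every nonzero `f ∈ V` has a degree: there are `r ∈ ℝ` and
`c ≠ 0` with `f(t)/t^r → c` as `t → ∞`. Then `V` has a basis `F₁,…,F_N` together with real
numbers `r₁ < ⋯ < r_N` and nonzero reals `c₁,…,c_N` such that `F_i(t)/t^{r_i} → c_i` as
`t → ∞` for each `i`. -/
theorem basis_with_increasing_degrees
    (V : Submodule ℝ ({t : ℝ // (0:ℝ) ≤ t} → ℝ))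
    (hV : V ≠ ⊥) (hfin : FiniteDimensional ℝ V)
    (hdeg : ∀ f ∈ V, f ≠ 0 → ∃ r c : ℝ, c ≠ 0 ∧
      Tendsto (fun t : {t : ℝ // (0:ℝ) ≤ t} => f t / (t : ℝ) ^ r) atTop (𝓝 c)) :
    ∃ (N : ℕ) (b : Module.Basis (Fin N) ℝ V) (r : Fin N → ℝ) (c : Fin N → ℝ),
      StrictMono r ∧ (∀ i, c i ≠ 0) ∧
      ∀ i, Tendsto
        (fun t : {t : ℝ // (0:ℝ) ≤ t} => ((b i : {t : ℝ // (0:ℝ) ≤ t} → ℝ)) t / (t : ℝ) ^ (r i))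
        atTop (𝓝 (c i)) := by
  classical
  set D : Set ℝ := {x | ∃ f, f ∈ V ∧ ∃ c : ℝ, c ≠ 0 ∧
    Tendsto (fun t : {t : ℝ // (0:ℝ) ≤ t} => f t / (t:ℝ) ^ x) atTop (𝓝 c)} with hDdef
  have hch : ∀ x : D, ∃ f, f ∈ V ∧ ∃ c : ℝ, c ≠ 0 ∧
      Tendsto (fun t : {t : ℝ // (0:ℝ) ≤ t} => f t / (t:ℝ) ^ (x:ℝ)) atTop (𝓝 c) :=
    fun x => x.2
  choose φ hφV ψ hψ hψt using hch
  -- linear independence of the chosen functions, hence finiteness of the set of degrees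
  have hindepD : LinearIndependent ℝ φ :=
    indep_of_distinct_deg φ (fun x => (x:ℝ)) Subtype.coe_injective ψ hψ hψt
  have hindepD' : LinearIndependent ℝ (fun x : D => (⟨φ x, hφV x⟩ : V)) :=
    LinearIndependent.of_comp V.subtype hindepD
  have hfinD : Finite D := hindepD'.finite
  have hDfin : D.Finite := Set.toFinite D
  set N : ℕ := hDfin.toFinset.card with hN
  set iso := hDfin.toFinset.orderIsoOfFin rfl with hiso
  set d : Fin N → ℝ := fun i => ((iso i : ℝ)) with hd
  have hdD : ∀ i, d i ∈ D := fun i => hDfin.mem_toFinset.mp (iso i).2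
  have hdmono : StrictMono d := fun i j h => Subtype.coe_lt_coe.mpr (iso.strictMono h)
  set el : Fin N → D := fun i => ⟨d i, hdD i⟩ with hel
  set F0 : Fin N → ({t : ℝ // (0:ℝ) ≤ t} → ℝ) := fun i => φ (el i) with hF0
  set cc : Fin N → ℝ := fun i => ψ (el i) with hcc
  have hFt : ∀ i, Tendsto (fun t : {t : ℝ // (0:ℝ) ≤ t} => F0 i t / (t:ℝ) ^ (d i))
      atTop (𝓝 (cc i)) := fun i => hψt (el i)
  have hccne : ∀ i, cc i ≠ 0 := fun i => hψ (el i)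
  have hindepF : LinearIndependent ℝ F0 :=
    indep_of_distinct_deg F0 d hdmono.injective cc hccne hFt
  -- key spanning claim by strong induction on the index of the degree
  have key : ∀ m : ℕ, ∀ x : D, ((iso.symm ⟨(x:ℝ), hDfin.mem_toFinset.mpr x.2⟩ : Fin N) : ℕ) = m →
      ∀ g, g ∈ V → ∀ c0 : ℝ, c0 ≠ 0 →
      Tendsto (fun t : {t : ℝ // (0:ℝ) ≤ t} => g t / (t:ℝ) ^ (x:ℝ)) atTop (𝓝 c0) →
      g ∈ Submodule.span ℝ (Set.range F0) := by
    intro m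
    induction m using Nat.strong_induction_on with
    | _ m IH =>
      intro x hx g hgV c0 hc0 hgt
      set i0 : Fin N := iso.symm ⟨(x:ℝ), hDfin.mem_toFinset.mpr x.2⟩ with hi0
      have hdi0 : d i0 = (x:ℝ) := by
        simp only [hd, hi0, OrderIso.apply_symm_apply]
      set g' : {t : ℝ // (0:ℝ) ≤ t} → ℝ := g - (c0 / cc i0) • F0 i0 with hg'
      have hg'V : g' ∈ V := V.sub_mem hgV (V.smul_mem _ (hφV (el i0)))
      have hg't : Tendsto (fun t : {t : ℝ // (0:ℝ) ≤ t} => g' t / (t:ℝ) ^ (x:ℝ))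
          atTop (𝓝 0) := by
        have h2 := hgt.sub (((hFt i0).const_mul (c0 / cc i0)))
        rw [hdi0] at h2
        have heq : c0 - c0 / cc i0 * cc i0 = 0 := by
          rw [div_mul_cancel₀ _ (hccne i0), sub_self]
        rw [heq] at h2
        refine Tendsto.congr (fun t => ?_) h2
        simp only [hg', Pi.sub_apply, Pi.smul_apply, smul_eq_mul, sub_div, mul_div_assoc]
      by_cases hg'0 : g' = 0
      · have hgeq : g = (c0 / cc i0) • F0 i0 := by
          have := sub_eq_zero.mp hg'0
          exact this
        rw [hgeq]
        exact Submodule.smul_mem _ _ (Submodule.subset_span ⟨i0, rfl⟩)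
      · obtain ⟨r, c', hc', hrt⟩ := hdeg g' hg'V hg'0
        have hrD : r ∈ D := ⟨g', hg'V, c', hc', hrt⟩
        have hlt : r < (x:ℝ) := lt_of_deg hc' hrt hg't
        set i' : Fin N := iso.symm ⟨r, hDfin.mem_toFinset.mpr hrD⟩ with hi'
        have hdi' : d i' = r := by
          simp only [hd, hi', OrderIso.apply_symm_apply]
        have hii : i' < i0 := by
          have : d i' < d i0 := by rw [hdi', hdi0]; exact hlt
          exact hdmono.lt_iff_lt.mp this
        have hmem : g' ∈ Submodule.span ℝ (Set.range F0) :=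
          IH (i' : ℕ) (by rw [← hx]; exact hii) ⟨r, hrD⟩ rfl g' hg'V c' hc' hrt
        have hgsum : g = g' + (c0 / cc i0) • F0 i0 := by
          rw [hg']; abel
        rw [hgsum]
        exact Submodule.add_mem _ hmem
          (Submodule.smul_mem _ _ (Submodule.subset_span ⟨i0, rfl⟩))
  have hspan0 : ∀ g, g ∈ V → g ∈ Submodule.span ℝ (Set.range F0) := by
    intro g hg
    by_cases h0 : g = 0
    · rw [h0]; exact Submodule.zero_mem _
    · obtain ⟨r, c0, hc0, hrt⟩ := hdeg g hg h0
      exact key _ ⟨r, ⟨g, hg, c0, hc0, hrt⟩⟩ rfl g hg c0 hc0 hrt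
  set FV : Fin N → V := fun i => ⟨F0 i, hφV (el i)⟩ with hFV
  have hFVind : LinearIndependent ℝ FV := LinearIndependent.of_comp V.subtype hindepF
  have hFVspan : ⊤ ≤ Submodule.span ℝ (Set.range FV) := by
    rintro ⟨g, hg⟩ -
    have h1 := hspan0 g hg
    have h2 : Set.range F0 = V.subtype '' Set.range FV := by
      rw [← Set.range_comp]; rfl
    rw [h2, Submodule.span_image] at h1
    obtain ⟨y, hy, hyg⟩ := h1
    have : y = (⟨g, hg⟩ : V) := Subtype.ext hyg
    rwa [← this]
  refine ⟨N, Module.Basis.mk hFVind hFVspan, d, cc, hdmono, hccne, fun i => ?_⟩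
  rw [Module.Basis.mk_apply]
  exact hFt i
end

section
/- Let n ≥ 1 and let f₀,…,f_n, h₁,…,h_n : [0,∞) → ℝ be continuous functions with h_i(t) ≠ 0 for all t and all i. Assume: (1) f₀ = h₁·h₂⋯h_n pointwise; there is c ≠ 0 with f₀(t)/tⁿ → c as t → ∞; and there are reals r₁ ≥ r₂ ≥ ⋯ ≥ r_n > 0 and nonzero reals c₁,…,c_n with h_i(t)/t^{r_i} → c_i as t → ∞ for each i; (2) for every (a₁,…,a_n) ∈ ℝⁿ there exist c > 0 and T ≥ 1 such that |f₀(t) + a₁f₁(t) + ⋯ + a_nf_n(t)| ≥ c·tⁿ for all t ≥ T; (3) for every i ∈ {1,…,n} and every (a_{i+1},…,a_n) ∈ ℝ^{n−i} there exist ε > 0, c > 0 and T ≥ 1 such that |f_i(t) + a_{i+1}f_{i+1}(t) + ⋯ + a_nf_n(t)| ≥ c·t^{n−i+ε} for all t ≥ T. Define φ(t) to be the (n+1)×(n+1) real matrix with rows and columns indexed by 0,…,n whose entries are: φ(t)₀₀ = f₀(t), φ(t)₀ⱼ = fⱼ(t) for 1 ≤ j ≤ n, φ(t)ᵢᵢ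 = hᵢ(t)⁻¹ for 1 ≤ i ≤ n, and all other entries 0. Then for every k with 1 ≤ k ≤ n and every nonzero v in the k-th exterior power ⋀^k ℝ^{n+1}, one has ‖(⋀^k φ(t))·v‖ → ∞ as t → ∞, where ⋀^k φ(t) is the linear map induced by φ(t) on ⋀^k ℝ^{n+1} and ‖·‖ is any fixed norm on the finite-dimensional space ⋀^k ℝ^{n+1}. -/
open Filter Topology Matrix

open Filter Topology Matrix

namespace ExtAux
variable (N k : ℕ)

abbrev V (N : ℕ) := Fin N → ℝ
abbrev E (N : ℕ) := ExteriorAlgebra ℝ (V N)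
abbrev Idx (N k : ℕ) := {s : Finset (Fin N) // s.card = k}

variable {N k}

/-- basis vectors -/
noncomputable def ee (j : Fin N) : V N := Pi.single j 1

noncomputable def emb (K : Idx N k) : Fin k → Fin N := fun t => K.1.orderIsoOfFin K.2 t

lemma emb_strictMono (K : Idx N k) : StrictMono (emb K) :=
  fun _ _ h => (K.1.orderIsoOfFin K.2).strictMono h

lemma emb_injective (K : Idx N k) : Function.Injective (emb K) :=
  (emb_strictMono K).injective

lemma emb_mem (K : Idx N k) (t : Fin k) : emb K t ∈ K.1 := (K.1.orderIsoOfFin K.2 t).2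

/-- the determinant alternating map associated to a `k`-subset -/
noncomputable def wdg (K : Idx N k) : (V N) [⋀^Fin k]→ₗ[ℝ] ℝ :=
  (Matrix.detRowAlternating : ((Fin k → ℝ)) [⋀^Fin k]→ₗ[ℝ] ℝ).compLinearMap
    (LinearMap.funLeft ℝ ℝ (emb K))

lemma wdg_apply (K : Idx N k) (x : Fin k → V N) :
    wdg K x = Matrix.det (Matrix.of (fun s t => x s (emb K t))) := rfl

/-- the coefficient functional -/
noncomputable def lf (K : Idx N k) : E N →ₗ[ℝ] ℝ :=
  ExteriorAlgebra.liftAlternating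
    (Function.update (fun i => (0 : (V N) [⋀^Fin i]→ₗ[ℝ] ℝ)) k (wdg K))

lemma lf_ιMulti (K : Idx N k) (x : Fin k → V N) :
    lf K (ExteriorAlgebra.ιMulti ℝ k x) = wdg K x := by
  rw [lf, ExteriorAlgebra.liftAlternating_apply_ιMulti, Function.update_self]

lemma lf_ιMulti_ne (K : Idx N k) {i : ℕ} (hi : i ≠ k) (x : Fin i → V N) :
    lf K (ExteriorAlgebra.ιMulti ℝ i x) = 0 := by
  rw [lf, ExteriorAlgebra.liftAlternating_apply_ιMulti, Function.update_of_ne hi]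
  rfl

lemma altSum_apply {ι : Type*} [Fintype ι] (s : Finset ι)
    (f : ι → ((V N) [⋀^Fin k]→ₗ[ℝ] ℝ)) (x : Fin k → V N) :
    (∑ i ∈ s, f i) x = ∑ i ∈ s, f i x := by
  induction s using Finset.cons_induction with
  | empty => simp
  | cons a s ha ih => rw [Finset.sum_cons, Finset.sum_cons, ← ih]; rfl

lemma ee_apply (j l : Fin N) : ee j l = if j = l then 1 else 0 := by
  rw [ee, Pi.single_apply]; simp [eq_comm]

/-- delta property -/
lemma wdg_delta (K J : Idx N k) :
    wdg K (fun s => ee (emb J s)) = if K = J then 1 else 0 := by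
  rw [wdg_apply]
  split_ifs with hKJ
  · subst hKJ
    have : (Matrix.of fun s t => ee (emb K s) (emb K t)) = (1 : Matrix (Fin k) (Fin k) ℝ) := by
      ext s t
      rw [Matrix.of_apply, ee_apply, Matrix.one_apply]
      simp [ (emb_injective K).eq_iff ]
    rw [this, Matrix.det_one]
  · -- some column of zeroes: take t with emb K t ∉ J
    have hne : ¬ K.1 ⊆ J.1 := by
      intro hsub
      exact hKJ (Subtype.ext (Finset.eq_of_subset_of_card_le hsub (by rw [K.2, J.2])))
    obtain ⟨j, hjK, hjJ⟩ := Finset.not_subset.mp hne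
    obtain ⟨t, rfl⟩ : ∃ t, emb K t = j := by
      obtain ⟨t, ht⟩ := (K.1.orderIsoOfFin K.2).surjective ⟨j, hjK⟩
      exact ⟨t, by simpa [emb] using congrArg Subtype.val ht⟩
    apply Matrix.det_eq_zero_of_column_eq_zero t
    intro s
    rw [Matrix.of_apply, ee_apply, if_neg]
    intro hEq
    exact hjJ (hEq ▸ emb_mem J s)

/-- factorization of an injective tuple through a sorted one -/
lemma exists_perm_factor (m : Fin k → Fin N) (hm : Function.Injective m) :
    ∃ (K : Idx N k) (τ : Equiv.Perm (Fin k)), ∀ t, m t = emb K (τ t) := by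
  classical
  set s : Finset (Fin N) := Finset.image m Finset.univ with hs
  have hcard : s.card = k := by
    rw [hs, Finset.card_image_of_injective _ hm, Finset.card_univ, Fintype.card_fin]
  set K : Idx N k := ⟨s, hcard⟩ with hK
  have hmem : ∀ t, m t ∈ s := fun t => Finset.mem_image_of_mem m (Finset.mem_univ t)
  set m' : Fin k → {x // x ∈ s} := fun t => ⟨m t, hmem t⟩ with hm'
  have hm'inj : Function.Injective m' := fun a b hab => hm (congrArg Subtype.val hab)
  have hbij : Function.Bijective m' := by
    rw [Fintype.bijective_iff_injective_and_card]
    exact ⟨hm'inj, by simp [Fintype.card_coe, hcard]⟩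
  refine ⟨K, (Equiv.ofBijective m' hbij).trans (K.1.orderIsoOfFin K.2).toEquiv.symm, fun t => ?_⟩
  show m t = (K.1.orderIsoOfFin K.2 _ : Fin N)
  simp [emb, hm']

/-- expansion of an arbitrary alternating map in the `wdg` family -/
lemma wdg_expand (u : (V N) [⋀^Fin k]→ₗ[ℝ] ℝ) :
    u = ∑ K : Idx N k, u (fun s => ee (emb K s)) • wdg K := by
  classical
  refine Module.Basis.ext_alternating (Pi.basisFun ℝ (Fin N)) (fun m hm => ?_)
  obtain ⟨K₀, τ, hfac⟩ := exists_perm_factor m hm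
  have hb : ∀ j : Fin N, (Pi.basisFun ℝ (Fin N)) j = ee j := fun j => by
    rw [Pi.basisFun_apply, ee]
  have hcomp : (fun i => (Pi.basisFun ℝ (Fin N)) (m i)) = (fun i => ee (emb K₀ i)) ∘ τ := by
    funext i; rw [hb, hfac i]; rfl
  rw [hcomp]
  rw [AlternatingMap.map_perm, altSum_apply]
  have hterm : ∀ K : Idx N k,
      ((u fun s => ee (emb K s)) • wdg K) ((fun i => ee (emb K₀ i)) ∘ ⇑τ)
        = (if K = K₀ then (Equiv.Perm.sign τ) • u (fun s => ee (emb K₀ s)) else 0) := by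
    intro K
    rw [AlternatingMap.smul_apply,
      AlternatingMap.map_perm (wdg K) (fun s => ee (emb K₀ s)) τ, wdg_delta]
    split_ifs with h
    · subst h; rw [smul_comm]; simp
    · simp
  rw [Finset.sum_congr rfl (fun K _ => hterm K), Finset.sum_ite_eq' Finset.univ K₀]
  simp

lemma span_eq : Submodule.span ℝ (Set.range (ExteriorAlgebra.ιMulti ℝ k (M := V N)))
    = ⋀[ℝ]^k (V N) := ExteriorAlgebra.ιMulti_span_fixedDegree ℝ k

/-- the induced map preserves the k-th exterior power -/
lemma map_mem (A : V N →ₗ[ℝ] V N) {v : E N} (hv : v ∈ ⋀[ℝ]^k (V N)) :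
    ExteriorAlgebra.map A v ∈ ⋀[ℝ]^k (V N) := by
  rw [← span_eq] at hv ⊢
  induction hv using Submodule.span_induction with
  | mem x hx =>
      obtain ⟨y, rfl⟩ := hx
      rw [ExteriorAlgebra.map_apply_ιMulti]
      exact Submodule.subset_span ⟨A ∘ y, rfl⟩
  | zero => simp
  | add x y _ _ hx hy => rw [map_add]; exact add_mem hx hy
  | smul a x _ hx => rw [_root_.map_smul]; exact Submodule.smul_mem _ a hx

set_option synthInstance.maxHeartbeats 1000000 in
/-- separation: a member of the k-th exterior power on which all coefficient
functionals vanish is zero -/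
lemma sep {v : E N} (hv : v ∈ ⋀[ℝ]^k (V N)) (h0 : ∀ K : Idx N k, lf K v = 0) :
    v = 0 := by
  classical
  rw [← Module.forall_dual_apply_eq_zero_iff ℝ v]
  intro F
  have key : ∀ x ∈ ⋀[ℝ]^k (V N),
      F x = ∑ K : Idx N k, (F.compAlternatingMap (ExteriorAlgebra.ιMulti ℝ k))
        (fun s => ee (emb K s)) * lf K x := by
    intro x hx
    rw [← span_eq] at hx
    induction hx using Submodule.span_induction with
    | mem x hx =>
        obtain ⟨y, rfl⟩ := hx
        have hexp := wdg_expand (N := N) (k := k)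
          (F.compAlternatingMap (ExteriorAlgebra.ιMulti ℝ k))
        have := congrArg (fun (u : (V N) [⋀^Fin k]→ₗ[ℝ] ℝ) => u y) hexp
        rw [altSum_apply] at this
        show F (ExteriorAlgebra.ιMulti ℝ k y) = _
        calc F (ExteriorAlgebra.ιMulti ℝ k y)
            = (F.compAlternatingMap (ExteriorAlgebra.ιMulti ℝ k)) y := rfl
          _ = _ := by
              rw [this]
              refine Finset.sum_congr rfl (fun K _ => ?_)
              rw [AlternatingMap.smul_apply, lf_ιMulti, smul_eq_mul]
    | zero => simp
    | add x y _ _ hx hy => rw [map_add, hx, hy, ← Finset.sum_add_distrib]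
                           refine Finset.sum_congr rfl (fun K _ => ?_)
                           rw [map_add]; ring
    | smul a x _ hx =>
        simp only [_root_.map_smul, smul_eq_mul, hx, Finset.mul_sum]
        exact Finset.sum_congr rfl (fun K _ => by ring)
  rw [key v hv]
  simp [h0]

/-- the induced map on coefficients -/
lemma fact2 (A : V N →ₗ[ℝ] V N) (J : Idx N k) {v : E N} (hv : v ∈ ⋀[ℝ]^k (V N)) :
    lf J (ExteriorAlgebra.map A v)
      = ∑ K : Idx N k, wdg J (fun s => A (ee (emb K s))) * lf K v := by
  classical
  rw [← span_eq] at hv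
  induction hv using Submodule.span_induction with
  | mem x hx =>
      obtain ⟨y, rfl⟩ := hx
      rw [ExteriorAlgebra.map_apply_ιMulti, lf_ιMulti]
      have hexp := wdg_expand (N := N) (k := k) ((wdg J).compLinearMap A)
      have := congrArg (fun (u : (V N) [⋀^Fin k]→ₗ[ℝ] ℝ) => u y) hexp
      rw [altSum_apply] at this
      calc wdg J (A ∘ y) = ((wdg J).compLinearMap A) y := rfl
        _ = _ := by
            rw [this]
            refine Finset.sum_congr rfl (fun K _ => ?_)
            rw [AlternatingMap.smul_apply, lf_ιMulti, smul_eq_mul]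
            rfl
  | zero => simp
  | add x y _ _ hx hy =>
      rw [map_add, map_add, hx, hy, ← Finset.sum_add_distrib]
      refine Finset.sum_congr rfl (fun K _ => ?_)
      rw [map_add]; ring
  | smul a x _ hx =>
      simp only [_root_.map_smul, smul_eq_mul, hx, Finset.mul_sum]
      exact Finset.sum_congr rfl (fun K _ => by ring)

/-- finite-dimensionality of the k-th exterior power -/
lemma findim : FiniteDimensional ℝ ↥(⋀[ℝ]^k (V N)) := by
  classical
  set P := ⋀[ℝ]^k (V N)
  set Φ : ↥P →ₗ[ℝ] (Idx N k → ℝ) :=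
    { toFun := fun x => fun K => lf K x.1
      map_add' := by intro x y; funext K; simp
      map_smul' := by intro a x; funext K; simp }
  have hinj : Function.Injective Φ := by
    intro x y hxy
    have : ∀ K : Idx N k, lf K ((x - y : ↥P) : E N) = 0 := by
      intro K
      have := congrFun hxy K
      simp only [Φ, LinearMap.coe_mk, AddHom.coe_mk] at this
      rw [Submodule.coe_sub, map_sub, this, sub_self]
    have h2 := sep (Submodule.coe_mem (x - y)) this
    have h3 : x - y = 0 := Submodule.coe_eq_zero.mp h2
    exact sub_eq_zero.mp h3
  exact FiniteDimensional.of_injective Φ hinj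

set_option synthInstance.maxHeartbeats 1000000 in
set_option maxHeartbeats 1000000 in
/-- Any seminorm-like function on the k-th exterior power dominates any linear functional -/
lemma norm_compare (Nm : E N → ℝ)
    (h_add : ∀ x y : E N, x ∈ ⋀[ℝ]^k (V N) → y ∈ ⋀[ℝ]^k (V N) → Nm (x + y) ≤ Nm x + Nm y)
    (h_smul : ∀ (a : ℝ) (x : E N), x ∈ ⋀[ℝ]^k (V N) → Nm (a • x) = |a| * Nm x)
    (h_zero : ∀ x ∈ ⋀[ℝ]^k (V N), (Nm x = 0 ↔ x = 0))
    (ℓ : E N →ₗ[ℝ] ℝ) :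
    ∃ C : ℝ, 0 < C ∧ ∀ x ∈ ⋀[ℝ]^k (V N), |ℓ x| ≤ C * Nm x := by
  classical
  set P := ⋀[ℝ]^k (V N) with hP
  have hNm0 : Nm 0 = 0 := by
    have := h_smul 0 0 (Submodule.zero_mem P)
    simpa using this
  -- build a normed group structure on ↥P
  let gn : AddGroupNorm ↥P :=
    { toFun := fun x => Nm x.1
      map_zero' := hNm0
      add_le' := fun x y => h_add x.1 y.1 x.2 y.2
      neg' := fun x => by
        show Nm ((-x : ↥P) : E N) = Nm x.1
        have : ((-x : ↥P) : E N) = (-1 : ℝ) • (x : E N) := by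
          simp
        rw [this, h_smul (-1) x.1 x.2]; simp
      eq_zero_of_map_eq_zero' := fun x hx => by
        have := (h_zero x.1 x.2).mp hx
        exact Subtype.ext this }
  letI : NormedAddCommGroup ↥P := gn.toNormedAddCommGroup
  have hnorm : ∀ x : ↥P, ‖x‖ = Nm x.1 := fun x => rfl
  letI : NormedSpace ℝ ↥P :=
    { norm_smul_le := fun a x => by
        rw [hnorm, hnorm]
        have : ((a • x : ↥P) : E N) = a • (x : E N) := rfl
        rw [this, h_smul a x.1 x.2, Real.norm_eq_abs] }
  haveI : FiniteDimensional ℝ ↥P := findim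
  set ℓ' : ↥P →ₗ[ℝ] ℝ := ℓ.comp P.subtype with hℓ'
  have hcont : Continuous ℓ' := ℓ'.continuous_of_finiteDimensional
  set ℓc : ↥P →L[ℝ] ℝ := ⟨ℓ', hcont⟩ with hℓc
  refine ⟨‖ℓc‖ + 1, by positivity, fun x hx => ?_⟩
  have := ℓc.le_opNorm ⟨x, hx⟩
  rw [hnorm] at this
  have hNnn : 0 ≤ Nm x := by
    rw [← hnorm ⟨x, hx⟩]; exact norm_nonneg _
  calc |ℓ x| = ‖ℓc ⟨x, hx⟩‖ := by rw [hℓc]; rfl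
    _ ≤ ‖ℓc‖ * Nm x := this
    _ ≤ (‖ℓc‖ + 1) * Nm x := by nlinarith [norm_nonneg ℓc]

section Det
variable [NeZero N] {J K : Idx N k}

lemma emb_zero (h0J : (0 : Fin N) ∈ J.1) [NeZero k] : emb J 0 = 0 := by
  obtain ⟨t₀, ht₀⟩ := (J.1.orderIsoOfFin J.2).surjective ⟨0, h0J⟩
  have h1 : emb J t₀ = 0 := congrArg Subtype.val ht₀
  have h2 : emb J 0 ≤ emb J t₀ := (emb_strictMono J).monotone (Fin.zero_le (n := k) t₀)
  rw [h1] at h2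
  exact le_antisymm h2 (Fin.zero_le _)

lemma k_ne_zero (h0J : (0 : Fin N) ∈ J.1) : k ≠ 0 := by
  intro hk
  have h1 := Finset.card_pos.mpr ⟨_, h0J⟩
  rw [J.2, hk] at h1
  exact lt_irrefl 0 h1

/-- vanishing case of the matrix coefficients -/
lemma det_vanish (h0J : (0 : Fin N) ∈ J.1) (hsub : ¬ J.1.erase 0 ⊆ K.1)
    (fv dv : Fin N → ℝ) :
    wdg J (fun s => fv (emb K s) • ee (0 : Fin N) + dv (emb K s) • ee (emb K s)) = 0 := by
  classical
  haveI : NeZero k := ⟨k_ne_zero h0J⟩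
  obtain ⟨l, hlJ, hlK⟩ := Finset.not_subset.mp hsub
  obtain ⟨t, rfl⟩ : ∃ t, emb J t = l := by
    obtain ⟨t, ht⟩ := (J.1.orderIsoOfFin J.2).surjective ⟨l, Finset.mem_of_mem_erase hlJ⟩
    exact ⟨t, congrArg Subtype.val ht⟩
  rw [wdg_apply]
  apply Matrix.det_eq_zero_of_column_eq_zero t
  intro s
  rw [Matrix.of_apply]
  have hne0 : emb J t ≠ 0 := Finset.ne_of_mem_erase hlJ
  have hneK : emb K s ≠ emb J t := fun hEq => hlK (hEq ▸ emb_mem K s)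
  simp only [Pi.add_apply, Pi.smul_apply, smul_eq_mul, ee_apply]
  rw [if_neg (fun hEq => hne0 hEq.symm), if_neg hneK]
  ring

/-- main case of the matrix coefficients -/
lemma det_main (h0J : (0 : Fin N) ∈ J.1) (j : Fin N) (hj : j ∉ J.1.erase 0)
    (hK : K.1 = insert j (J.1.erase 0)) :
    ∃ ε : ℝ, |ε| = 1 ∧ ∀ fv dv : Fin N → ℝ, dv 0 = 0 →
      wdg J (fun s => fv (emb K s) • ee (0 : Fin N) + dv (emb K s) • ee (emb K s))
        = ε * (fv j * ∏ l ∈ J.1.erase 0, dv l) := by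
  classical
  haveI : NeZero k := ⟨k_ne_zero h0J⟩
  have hJ0 : emb J 0 = 0 := emb_zero h0J
  have hJne : ∀ t : Fin k, t ≠ 0 → emb J t ≠ 0 := by
    intro t ht hEq
    exact ht (emb_injective J (hEq.trans hJ0.symm))
  have hJmem : ∀ t : Fin k, t ≠ 0 → emb J t ∈ J.1.erase 0 :=
    fun t ht => Finset.mem_erase.mpr ⟨hJne t ht, emb_mem J t⟩
  set q : Fin k → Fin N := fun t => if t = 0 then j else emb J t with hq
  have hqK : ∀ t, q t ∈ K.1 := by
    intro t
    rw [hK, hq]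
    by_cases ht : t = 0
    · simp [ht]
    · simp only [if_neg ht]
      exact Finset.mem_insert_of_mem (hJmem t ht)
  have hqinj : Function.Injective q := by
    intro a b hab
    rw [hq] at hab
    by_cases ha : a = 0 <;> by_cases hb : b = 0
    · rw [ha, hb]
    · simp only [if_pos ha, if_neg hb] at hab
      exact absurd (hab ▸ hJmem b hb) hj
    · simp only [if_neg ha, if_pos hb] at hab
      exact absurd (hab ▸ hJmem a ha) hj
    · simp only [if_neg ha, if_neg hb] at hab
      exact emb_injective J hab
  set p : Fin k → Fin k := fun t => (K.1.orderIsoOfFin K.2).symm ⟨q t, hqK t⟩ with hp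
  have hpemb : ∀ t, emb K (p t) = q t := by
    intro t
    rw [hp, emb]
    exact congrArg Subtype.val ((K.1.orderIsoOfFin K.2).apply_symm_apply ⟨q t, hqK t⟩)
  have hpinj : Function.Injective p := by
    intro a b hab
    apply hqinj
    rw [← hpemb a, ← hpemb b, hab]
  set π : Equiv.Perm (Fin k) := Equiv.ofBijective p (Finite.injective_iff_bijective.mp hpinj)
    with hπ
  have hπapp : ∀ t, π t = p t := fun t => rfl
  refine ⟨((Equiv.Perm.sign π : ℤ) : ℝ),
    by rcases Int.units_eq_one_or (Equiv.Perm.sign π) with h | h <;> rw [h] <;> norm_num,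
    fun fv dv hdv0 => ?_⟩
  rw [wdg_apply]
  set Mtx : Matrix (Fin k) (Fin k) ℝ := Matrix.of (fun s t =>
    (fv (emb K s) • ee (0 : Fin N) + dv (emb K s) • ee (emb K s)) (emb J t)) with hMtx
  have hperm := Matrix.det_permute π Mtx
  set Nt : Matrix (Fin k) (Fin k) ℝ := Mtx.submatrix π id with hNt
  have hNent : ∀ s t, Nt s t =
      fv (q s) * (if t = 0 then 1 else 0) + dv (q s) * (if q s = emb J t then 1 else 0) := by
    intro s t
    rw [hNt, Matrix.submatrix_apply, hMtx, Matrix.of_apply, id]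
    simp only [Pi.add_apply, Pi.smul_apply, smul_eq_mul, ee_apply, hπapp, hpemb]
    have hiff : ((0:Fin N) = emb J t) ↔ (t = 0) := by
      constructor
      · intro hEq; by_contra ht; exact hJne t ht hEq.symm
      · intro ht; rw [ht, hJ0]
    rw [if_congr hiff rfl rfl]
  have htri : Nt.BlockTriangular OrderDual.toDual := by
    intro s t hst
    have hst' : s < t := hst
    have ht0 : t ≠ 0 := by
      intro h
      rw [h] at hst'
      have hv : (s : ℕ) < 0 := by simpa [Fin.lt_def] using hst'
      omega
    rw [hNent, if_neg ht0, mul_zero, zero_add, if_neg, mul_zero]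
    by_cases hs : s = 0
    · rw [hq]; simp only [if_pos hs]
      intro hEq
      exact hj (hEq ▸ hJmem t ht0)
    · rw [hq]; simp only [if_neg hs]
      intro hEq
      exact absurd (emb_injective J hEq) (ne_of_lt hst')
  have hdet : Nt.det = fv j * ∏ l ∈ J.1.erase 0, dv l := by
    rw [Matrix.det_of_lowerTriangular Nt htri]
    rw [← Finset.mul_prod_erase Finset.univ _ (Finset.mem_univ (0 : Fin k))]
    have hq0 : q 0 = j := by simp [hq]
    have h00 : Nt 0 0 = fv j := by
      rw [hNent, if_pos rfl, mul_one, hq0]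
      by_cases hj0 : j = 0
      · rw [hj0, hdv0, zero_mul, add_zero]
      · rw [if_neg (fun hEq => hj0 (hEq.trans hJ0)), mul_zero, add_zero]
    rw [h00]
    congr 1
    refine Finset.prod_bij (fun t _ => emb J t) ?_ ?_ ?_ ?_
    · intro t ht
      exact hJmem t (Finset.ne_of_mem_erase ht)
    · intro a ha b hb hEq
      exact emb_injective J hEq
    · intro l hl
      obtain ⟨t, ht⟩ := (J.1.orderIsoOfFin J.2).surjective ⟨l, Finset.mem_of_mem_erase hl⟩
      have htv : emb J t = l := congrArg Subtype.val ht
      have ht0 : t ≠ 0 := by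
        intro ht0
        rw [ht0, hJ0] at htv
        exact Finset.ne_of_mem_erase hl htv.symm
      exact ⟨t, Finset.mem_erase.mpr ⟨ht0, Finset.mem_univ t⟩, htv⟩
    · intro t ht
      have ht0 : t ≠ 0 := Finset.ne_of_mem_erase ht
      have hqt : q t = emb J t := by simp [hq, ht0]
      rw [hNent, if_neg ht0, mul_zero, zero_add, hqt, if_pos rfl, mul_one]
  have hsgn : (((Equiv.Perm.sign π : ℤ) : ℝ)) * ((Equiv.Perm.sign π : ℤ) : ℝ) = 1 := by
    rcases Int.units_eq_one_or (Equiv.Perm.sign π) with h | h <;> rw [h] <;> norm_num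
  have hthis : Nt.det = ((Equiv.Perm.sign π : ℤ) : ℝ) * Mtx.det := by
    rw [hNt]
    exact_mod_cast hperm
  rw [hdet] at hthis
  linear_combination (-(((Equiv.Perm.sign π : ℤ) : ℝ))) * hthis - Mtx.det * hsgn

end Det

end ExtAux

open ExtAux

lemma rpow_finset_sum {α : Type*} (s : Finset α) (g : α → ℝ) {x : ℝ} (hx : 0 < x) :
    x ^ (∑ i ∈ s, g i) = ∏ i ∈ s, x ^ (g i) := by
  induction s using Finset.cons_induction with
  | empty => simp
  | cons a s ha ih => rw [Finset.sum_cons, Finset.prod_cons, Real.rpow_add hx, ih]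


set_option maxHeartbeats 2000000 in
set_option synthInstance.maxHeartbeats 1000000 in
/-- For the curve `φ(t)` in `SL(n+1,ℝ)` whose top row is
`(f₀(t), f₁(t), …, f_n(t))` and whose remaining diagonal entries are `h₁(t)⁻¹,…,h_n(t)⁻¹`
(zero elsewhere), under the degree conditions (1)–(3), for every `1 ≤ k ≤ n` and every
nonzero `v` in the `k`-th exterior power `⋀^k ℝ^{n+1}`, one has `‖(⋀^k φ(t))·v‖ → ∞`
as `t → ∞`, for any fixed norm `‖·‖` on `⋀^k ℝ^{n+1}`. -/
theorem exterior_powers_diverge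
    (n : ℕ) (hn : 1 ≤ n)
    (f h : Fin (n + 1) → ℝ → ℝ)
    (hf_cont : ∀ j, ContinuousOn (f j) (Set.Ici (0:ℝ)))
    (hh_cont : ∀ i : Fin (n + 1), i ≠ 0 → ContinuousOn (h i) (Set.Ici (0:ℝ)))
    (hh_ne : ∀ i : Fin (n + 1), i ≠ 0 → ∀ t : ℝ, 0 ≤ t → h i t ≠ 0)
    -- condition (1): `f₀ = h₁⋯h_n`, `deg f₀ = n`, and `deg h₁ ≥ ⋯ ≥ deg h_n > 0`
    (hprod : ∀ t : ℝ, 0 ≤ t →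
      f 0 t = ∏ i ∈ Finset.univ.erase (0 : Fin (n + 1)), h i t)
    (hf0deg : ∃ c : ℝ, c ≠ 0 ∧
      Tendsto (fun t : ℝ => f 0 t / t ^ n) atTop (𝓝 c))
    (r c : Fin (n + 1) → ℝ)
    (hr_mono : ∀ i j : Fin (n + 1), i ≠ 0 → j ≠ 0 → i ≤ j → r j ≤ r i)
    (hr_pos : ∀ i : Fin (n + 1), i ≠ 0 → 0 < r i)
    (hh_deg : ∀ i : Fin (n + 1), i ≠ 0 → c i ≠ 0 ∧
      Tendsto (fun t : ℝ => h i t / t ^ (r i)) atTop (𝓝 (c i)))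
    -- condition (2): `deg (f₀ + g) ≥ n` for `g` in the span of `f₁,…,f_n`
    (hcond2 : ∀ a : Fin (n + 1) → ℝ, ∃ c₀ : ℝ, 0 < c₀ ∧ ∃ T : ℝ, 1 ≤ T ∧
      ∀ t : ℝ, T ≤ t →
        c₀ * t ^ n ≤ |f 0 t + ∑ i ∈ Finset.univ.erase (0 : Fin (n + 1)), a i * f i t|)
    -- condition (3): `deg (f_i + g) > n − i` for `g` in the span of `f_{i+1},…,f_n`
    (hcond3 : ∀ i : Fin (n + 1), i ≠ 0 → ∀ a : Fin (n + 1) → ℝ,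
      ∃ ε : ℝ, 0 < ε ∧ ∃ c₀ : ℝ, 0 < c₀ ∧ ∃ T : ℝ, 1 ≤ T ∧
        ∀ t : ℝ, T ≤ t →
          c₀ * t ^ ((n : ℝ) - (i : ℕ) + ε) ≤
            |f i t + ∑ j ∈ Finset.univ.filter (fun j : Fin (n + 1) => i < j), a j * f j t|)
    (φ : ℝ → Matrix (Fin (n + 1)) (Fin (n + 1)) ℝ)
    (hφ : ∀ t : ℝ, ∀ i j : Fin (n + 1),
      φ t i j = if i = 0 then f j t else if i = j then (h i t)⁻¹ else 0) :
    ∀ k : ℕ, 1 ≤ k → k ≤ n →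
      ∀ v : ExteriorAlgebra ℝ (Fin (n + 1) → ℝ),
        v ∈ ⋀[ℝ]^k (Fin (n + 1) → ℝ) → v ≠ 0 →
        ∀ Nm : ExteriorAlgebra ℝ (Fin (n + 1) → ℝ) → ℝ,
          (∀ x y : ExteriorAlgebra ℝ (Fin (n + 1) → ℝ),
            x ∈ ⋀[ℝ]^k (Fin (n + 1) → ℝ) → y ∈ ⋀[ℝ]^k (Fin (n + 1) → ℝ) →
              Nm (x + y) ≤ Nm x + Nm y) →
          (∀ (a : ℝ) (x : ExteriorAlgebra ℝ (Fin (n + 1) → ℝ)),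
            x ∈ ⋀[ℝ]^k (Fin (n + 1) → ℝ) → Nm (a • x) = |a| * Nm x) →
          (∀ x ∈ ⋀[ℝ]^k (Fin (n + 1) → ℝ), (Nm x = 0 ↔ x = 0)) →
          Tendsto
            (fun t : ℝ => Nm (ExteriorAlgebra.map (Matrix.toLin' (φ t)) v))
            atTop atTop := by
  classical
  intro k hk1 hkn v hv hv0 Nm hNadd hNsmul hNzero
  haveI : NeZero (n + 1) := ⟨n.succ_ne_zero⟩
  obtain ⟨c0, hc0ne, hc0lim⟩ := hf0deg
  -- the diagonal coefficients
  set dv : ℝ → Fin (n + 1) → ℝ := fun t j => if j = 0 then 0 else (h j t)⁻¹ with hdv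
  have hdv0 : ∀ t, dv t 0 = 0 := fun t => by simp [hdv]
  -- structure of the linear map on basis vectors
  have hxform : ∀ (t : ℝ) (j : Fin (n + 1)),
      (Matrix.toLin' (φ t)) (ee j) = f j t • ee (0 : Fin (n+1)) + dv t j • ee j := by
    intro t j
    have h1 : (Matrix.toLin' (φ t)) (ee j) = fun i => φ t i j * 1 := by
      rw [Matrix.toLin'_apply]
      exact Matrix.mulVec_single _ _ _
    rw [h1]
    funext l
    simp only [Pi.add_apply, Pi.smul_apply, smul_eq_mul, ee_apply, hφ t l j, hdv, mul_one]
    by_cases hl0 : l = 0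
    · subst hl0
      rw [if_pos rfl, if_pos rfl, mul_one]
      by_cases hj0 : j = 0
      · subst hj0; rw [if_pos rfl, if_pos rfl, zero_mul, add_zero]
      · rw [if_neg hj0, if_neg hj0, mul_zero, add_zero]
    · rw [if_neg hl0, if_neg (fun hEq : (0:Fin (n+1)) = l => hl0 hEq.symm), mul_zero, zero_add]
      by_cases hlj : l = j
      · subst hlj
        rw [if_pos rfl, if_pos rfl, if_neg hl0, mul_one]
      · rw [if_neg hlj, if_neg (fun hEq : j = l => hlj hEq.symm), mul_zero]
  -- coefficients of v
  set a : Idx (n+1) k → ℝ := fun K => lf K v with ha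
  -- the sum of the degrees equals n
  have hsum : ∑ i ∈ Finset.univ.erase (0 : Fin (n+1)), r i = (n : ℝ) := by
    set S := Finset.univ.erase (0 : Fin (n+1)) with hS
    set ρ := ∑ i ∈ S, r i with hρ
    have hCne : (∏ i ∈ S, c i) ≠ 0 :=
      Finset.prod_ne_zero_iff.mpr (fun i hi => (hh_deg i (Finset.ne_of_mem_erase hi)).1)
    have hw : Tendsto (fun t : ℝ => ∏ i ∈ S, (h i t / t ^ (r i))) atTop (𝓝 (∏ i ∈ S, c i)) :=
      tendsto_finset_prod S (fun i hi => (hh_deg i (Finset.ne_of_mem_erase hi)).2)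
    have hq : Tendsto (fun t : ℝ => (f 0 t / t ^ n) / (∏ i ∈ S, (h i t / t ^ (r i)))) atTop
        (𝓝 (c0 / ∏ i ∈ S, c i)) := hc0lim.div hw hCne
    have heq : ∀ᶠ t : ℝ in atTop,
        (f 0 t / t ^ n) / (∏ i ∈ S, (h i t / t ^ (r i))) = t ^ (ρ - (n:ℝ)) := by
      filter_upwards [eventually_ge_atTop (1:ℝ), hw.eventually_ne hCne] with t ht hne
      have ht0 : (0:ℝ) < t := lt_of_lt_of_le zero_lt_one ht
      have hprodeq : ∏ i ∈ S, (h i t / t ^ (r i)) = f 0 t / t ^ ρ := by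
        rw [Finset.prod_div_distrib, ← rpow_finset_sum S r ht0, ← hprod t (le_of_lt ht0), hρ]
      rw [hprodeq] at hne ⊢
      have hf0ne : f 0 t ≠ 0 := by
        intro hEq; rw [hEq] at hne; simp at hne
      have hρpos : (0:ℝ) < t ^ ρ := Real.rpow_pos_of_pos ht0 ρ
      have hnpos : (0:ℝ) < t ^ n := pow_pos ht0 n
      rw [Real.rpow_sub ht0, Real.rpow_natCast]
      field_simp
    have htend : Tendsto (fun t : ℝ => t ^ (ρ - (n:ℝ))) atTop (𝓝 (c0 / ∏ i ∈ S, c i)) :=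
      hq.congr' heq
    rcases lt_trichotomy (ρ - (n:ℝ)) 0 with hlt | heq0 | hgt
    · exfalso
      have h0 : Tendsto (fun t : ℝ => t ^ (ρ - (n:ℝ))) atTop (𝓝 0) := by
        have := tendsto_rpow_neg_atTop (y := (n:ℝ) - ρ) (by linarith)
        simpa [neg_sub] using this
      have := tendsto_nhds_unique htend h0
      exact (div_ne_zero hc0ne hCne) this
    · linarith
    · exact absurd htend (not_tendsto_nhds_of_tendsto_atTop (tendsto_rpow_atTop hgt) _)
  -- product lower asymptotics
  have hPi : ∀ S : Finset (Fin (n+1)), S ⊆ Finset.univ.erase 0 →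
      ∃ cPi : ℝ, 0 < cPi ∧ ∀ᶠ t in atTop,
        cPi * t ^ (-(∑ l ∈ S, r l)) ≤ |∏ l ∈ S, (h l t)⁻¹| := by
    intro S hS
    set ρ := ∑ l ∈ S, r l with hρ
    set CS := ∏ l ∈ S, c l with hCS
    have hw : Tendsto (fun t : ℝ => ∏ l ∈ S, (h l t / t ^ (r l))) atTop (𝓝 CS) :=
      tendsto_finset_prod S (fun l hl => (hh_deg l (Finset.ne_of_mem_erase (hS hl))).2)
    have habs : Tendsto (fun t : ℝ => |∏ l ∈ S, (h l t / t ^ (r l))|) atTop (𝓝 |CS|) := hw.abs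
    refine ⟨(|CS| + 1)⁻¹, by positivity, ?_⟩
    filter_upwards [habs.eventually (gt_mem_nhds (lt_add_one |CS|)),
      eventually_ge_atTop (1:ℝ)] with t h1 h2
    have ht0 : (0:ℝ) < t := lt_of_lt_of_le zero_lt_one h2
    have hρpos : (0:ℝ) < t ^ ρ := Real.rpow_pos_of_pos ht0 ρ
    have hPne : (∏ l ∈ S, h l t) ≠ 0 :=
      Finset.prod_ne_zero_iff.mpr
        (fun l hl => hh_ne l (Finset.ne_of_mem_erase (hS hl)) t (le_of_lt ht0))
    have hprodeq : ∏ l ∈ S, (h l t / t ^ (r l)) = (∏ l ∈ S, h l t) / t ^ ρ := by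
      rw [Finset.prod_div_distrib, ← rpow_finset_sum S r ht0, hρ]
    rw [hprodeq, abs_div, abs_of_pos hρpos, div_lt_iff₀ hρpos] at h1
    have hinveq : |∏ l ∈ S, (h l t)⁻¹| = |∏ l ∈ S, h l t|⁻¹ := by
      rw [Finset.prod_inv_distrib, abs_inv]
    rw [hinveq, Real.rpow_neg (le_of_lt ht0)]
    have hstep : ((|CS| + 1) * t ^ ρ)⁻¹ ≤ |∏ l ∈ S, h l t|⁻¹ :=
      inv_anti₀ (abs_pos.mpr hPne) (le_of_lt h1)
    calc (|CS| + 1)⁻¹ * (t ^ ρ)⁻¹ = ((|CS| + 1) * t ^ ρ)⁻¹ := (mul_inv _ _).symm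
      _ ≤ _ := hstep
  -- the coefficient identity for a subset containing 0
  have hbW : ∀ (J : Idx (n+1) k), (0 : Fin (n+1)) ∈ J.1 → ∃ b : Fin (n+1) → ℝ,
      (∀ j, j ∈ J.1.erase 0 → b j = 0) ∧
      (∀ j, j ∉ J.1.erase 0 → ∀ K : Idx (n+1) k, K.1 = insert j (J.1.erase 0) →
        ∃ εj : ℝ, |εj| = 1 ∧ b j = εj * a K) ∧
      (∀ t : ℝ, lf J (ExteriorAlgebra.map (Matrix.toLin' (φ t)) v)
          = (∏ l ∈ J.1.erase 0, (h l t)⁻¹) * (∑ j, b j * f j t)) := by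
    intro J h0J
    haveI : NeZero k := ⟨k_ne_zero h0J⟩
    have hcardE : (J.1.erase 0).card = k - 1 := by
      rw [Finset.card_erase_of_mem h0J, J.2]
    have hcardI : ∀ j : Fin (n+1), j ∉ J.1.erase 0 → (insert j (J.1.erase 0)).card = k := by
      intro j hj
      rw [Finset.card_insert_of_notMem hj, hcardE]
      omega
    set Kof : ∀ j : Fin (n+1), j ∉ J.1.erase 0 → Idx (n+1) k :=
      fun j hj => ⟨insert j (J.1.erase 0), hcardI j hj⟩ with hKofdef
    have hdm : ∀ j : Fin (n+1), ∀ hj : j ∉ J.1.erase 0, ∃ ε : ℝ, |ε| = 1 ∧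
        ∀ fv dvv : Fin (n+1) → ℝ, dvv 0 = 0 →
          wdg J (fun s => fv (emb (Kof j hj) s) • ee (0:Fin (n+1))
            + dvv (emb (Kof j hj) s) • ee (emb (Kof j hj) s))
          = ε * (fv j * ∏ l ∈ J.1.erase 0, dvv l) :=
      fun j hj => det_main h0J j hj rfl
    choose εf hε1 hεdet using hdm
    set b : Fin (n+1) → ℝ :=
      fun j => if hj : j ∈ J.1.erase 0 then 0 else εf j hj * a (Kof j hj) with hbdef
    have hb1 : ∀ j, j ∈ J.1.erase 0 → b j = 0 := fun j hj => by rw [hbdef]; exact dif_pos hj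
    have hb2 : ∀ j, j ∉ J.1.erase 0 → ∀ K : Idx (n+1) k, K.1 = insert j (J.1.erase 0) →
        ∃ εj : ℝ, |εj| = 1 ∧ b j = εj * a K := by
      intro j hj K hK
      refine ⟨εf j hj, hε1 j hj, ?_⟩
      rw [hbdef]
      have hKK : Kof j hj = K := Subtype.ext hK.symm
      dsimp only
      rw [dif_neg hj, hKK]
    refine ⟨b, hb1, hb2, ?_⟩
    intro t
    -- helper for min' of singletons through the dite
    have hmin : ∀ (A : Finset (Fin (n+1))) (x : Fin (n+1)), A = {x} →
        (if hne : A.Nonempty then A.min' hne else 0) = x := by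
      intro A x hA
      subst hA
      rw [dif_pos ⟨x, Finset.mem_singleton_self x⟩]
      exact Finset.min'_singleton x
    set jof : Idx (n+1) k → Fin (n+1) :=
      fun K => if hne : (K.1 \ J.1.erase 0).Nonempty then (K.1 \ J.1.erase 0).min' hne else 0
      with hjofdef
    have hdiffcard : ∀ K : Idx (n+1) k, J.1.erase 0 ⊆ K.1 → (K.1 \ J.1.erase 0).card = 1 := by
      intro K hsub
      rw [Finset.card_sdiff_of_subset hsub, K.2, hcardE]
      omega
    have hjof : ∀ K : Idx (n+1) k, J.1.erase 0 ⊆ K.1 →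
        jof K ∉ J.1.erase 0 ∧ insert (jof K) (J.1.erase 0) = K.1 := by
      intro K hsub
      obtain ⟨x, hx⟩ := Finset.card_eq_one.mp (hdiffcard K hsub)
      have hjx : jof K = x := hmin _ x hx
      have hxmem : x ∈ K.1 \ J.1.erase 0 := by rw [hx]; exact Finset.mem_singleton_self x
      constructor
      · rw [hjx]; exact (Finset.mem_sdiff.mp hxmem).2
      · rw [hjx, Finset.insert_eq, ← hx, Finset.sdiff_union_of_subset hsub]
    have hjofK : ∀ (j : Fin (n+1)) (hj : j ∉ J.1.erase 0), jof (Kof j hj) = j := by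
      intro j hj
      apply hmin
      ext l
      simp only [hKofdef, Finset.mem_sdiff, Finset.mem_insert, Finset.mem_singleton]
      constructor
      · rintro ⟨hl1 | hl1, hl2⟩
        · exact hl1
        · exact absurd hl1 hl2
      · rintro rfl
        exact ⟨Or.inl rfl, hj⟩
    -- start the computation
    rw [fact2 (Matrix.toLin' (φ t)) J hv]
    have hterm : ∀ K : Idx (n+1) k,
        wdg J (fun s => (Matrix.toLin' (φ t)) (ee (emb K s))) * lf K v
        = wdg J (fun s => f (emb K s) t • ee (0:Fin (n+1))
            + dv t (emb K s) • ee (emb K s)) * a K := by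
      intro K
      rw [ha]
      congr 1
      congr 1
      exact funext (fun s => hxform t (emb K s))
    rw [Finset.sum_congr rfl (fun K _ => hterm K)]
    rw [← Finset.sum_filter_add_sum_filter_not Finset.univ
      (fun K : Idx (n+1) k => J.1.erase 0 ⊆ K.1)]
    have hz : ∑ K ∈ Finset.univ.filter (fun K : Idx (n+1) k => ¬ J.1.erase 0 ⊆ K.1),
        wdg J (fun s => f (emb K s) t • ee (0:Fin (n+1))
          + dv t (emb K s) • ee (emb K s)) * a K = 0 := by
      apply Finset.sum_eq_zero
      intro K hK
      rw [det_vanish h0J (Finset.mem_filter.mp hK).2 (fun j => f j t) (dv t), zero_mul]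
    rw [hz, add_zero]
    -- rewrite the right-hand side
    have hdveq : ∏ l ∈ J.1.erase 0, (h l t)⁻¹ = ∏ l ∈ J.1.erase 0, dv t l := by
      refine Finset.prod_congr rfl (fun l hl => ?_)
      rw [hdv]
      dsimp only
      rw [if_neg (Finset.ne_of_mem_erase hl)]
    have hbsplit : (∑ j, b j * f j t)
        = ∑ j ∈ Finset.univ.filter (fun j : Fin (n+1) => j ∉ J.1.erase 0), b j * f j t := by
      rw [← Finset.sum_filter_add_sum_filter_not Finset.univ
        (fun j : Fin (n+1) => j ∉ J.1.erase 0)]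
      have : ∑ j ∈ Finset.univ.filter (fun j : Fin (n+1) => ¬ j ∉ J.1.erase 0),
          b j * f j t = 0 := by
        apply Finset.sum_eq_zero
        intro j hj
        rw [hb1 j (not_not.mp (Finset.mem_filter.mp hj).2), zero_mul]
      rw [this, add_zero]
    rw [hdveq, hbsplit, Finset.mul_sum]
    refine Finset.sum_nbij' (i := jof)
      (j := fun j : Fin (n+1) => if hj : j ∈ J.1.erase 0 then J else Kof j hj)
      ?_ ?_ ?_ ?_ ?_
    · intro K hK
      have hsub := (Finset.mem_filter.mp hK).2
      exact Finset.mem_filter.mpr ⟨Finset.mem_univ _, (hjof K hsub).1⟩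
    · intro j hj
      have hjn := (Finset.mem_filter.mp hj).2
      rw [dif_neg hjn]
      refine Finset.mem_filter.mpr ⟨Finset.mem_univ _, ?_⟩
      show J.1.erase 0 ⊆ insert j (J.1.erase 0)
      exact Finset.subset_insert _ _
    · intro K hK
      have hsub := (Finset.mem_filter.mp hK).2
      rw [dif_neg (hjof K hsub).1]
      exact Subtype.ext (hjof K hsub).2
    · intro j hj
      have hjn := (Finset.mem_filter.mp hj).2
      rw [dif_neg hjn]
      exact hjofK j hjn
    · intro K hK
      have hsub := (Finset.mem_filter.mp hK).2
      have hjn := (hjof K hsub).1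
      have hKK : Kof (jof K) hjn = K := Subtype.ext (hjof K hsub).2
      have hd := hεdet (jof K) hjn (fun j => f j t) (dv t) (hdv0 t)
      rw [hKK] at hd
      rw [hd, hbdef]
      dsimp only
      rw [dif_neg hjn, hKK]
      ring
  have hassemble : ∀ (J : Idx (n+1) k), (0 : Fin (n+1)) ∈ J.1 →
      ∀ (b : Fin (n+1) → ℝ) (θ cW T : ℝ), 0 < cW →
      (∑ l ∈ J.1.erase 0, r l) < θ →
      (∀ t : ℝ, T ≤ t → cW * t ^ θ ≤ |∑ j, b j * f j t|) →
      (∀ t : ℝ, lf J (ExteriorAlgebra.map (Matrix.toLin' (φ t)) v)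
          = (∏ l ∈ J.1.erase 0, (h l t)⁻¹) * (∑ j, b j * f j t)) →
      ∃ (c3 δ : ℝ), 0 < c3 ∧ 0 < δ ∧ ∀ᶠ t in atTop,
        c3 * t ^ δ ≤ |lf J (ExteriorAlgebra.map (Matrix.toLin' (φ t)) v)| := by
    intro J h0J b θ cW T hcW hθ hW hid
    set ρ := ∑ l ∈ J.1.erase 0, r l with hρdef
    have hsubJ : J.1.erase 0 ⊆ Finset.univ.erase 0 := by
      intro l hl
      exact Finset.mem_erase.mpr ⟨Finset.ne_of_mem_erase hl, Finset.mem_univ l⟩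
    obtain ⟨cPi, hcPi, hevPi⟩ := hPi (J.1.erase 0) hsubJ
    refine ⟨cPi * cW, θ - ρ, by positivity, by linarith, ?_⟩
    filter_upwards [hevPi, eventually_ge_atTop (1:ℝ), eventually_ge_atTop T] with t h1 h2 h3
    have ht0 : (0:ℝ) < t := lt_of_lt_of_le zero_lt_one h2
    rw [hid t, abs_mul]
    have hW' := hW t h3
    have hsplit : t ^ (θ - ρ) = t ^ (-ρ) * t ^ θ := by
      rw [← Real.rpow_add ht0]; ring_nf
    calc cPi * cW * t ^ (θ - ρ) = (cPi * t ^ (-ρ)) * (cW * t ^ θ) := by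
          rw [hsplit]; ring
      _ ≤ |∏ l ∈ J.1.erase 0, (h l t)⁻¹| * |∑ j, b j * f j t| := by
          apply mul_le_mul h1 hW' (by positivity) (abs_nonneg _)
      _ = _ := rfl
  -- branch 2 : the `J`-coefficient of `v` does not vanish
  have hbranch2 : ∀ J : Idx (n+1) k, (0:Fin (n+1)) ∈ J.1 → a J ≠ 0 →
      ∃ (c3 δ : ℝ), 0 < c3 ∧ 0 < δ ∧ ∀ᶠ t in atTop,
        c3 * t ^ δ ≤ |lf J (ExteriorAlgebra.map (Matrix.toLin' (φ t)) v)| := by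
    intro J h0J haJ
    obtain ⟨b, hb1, hb2, hid⟩ := hbW J h0J
    obtain ⟨ε0, hε0, hb0⟩ := hb2 0 (Finset.notMem_erase _ _) J (Finset.insert_erase h0J).symm
    have hε0ne : ε0 ≠ 0 := by intro hEq; rw [hEq] at hε0; simp at hε0
    have hb0ne : b 0 ≠ 0 := by rw [hb0]; exact mul_ne_zero hε0ne haJ
    obtain ⟨c₀, hc₀, T, hT, hcnd⟩ := hcond2 (fun i => b i / b 0)
    have hWlow : ∀ t : ℝ, T ≤ t → (|b 0| * c₀) * t ^ ((n:ℕ):ℝ) ≤ |∑ j, b j * f j t| := by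
      intro t ht
      have hWs : ∑ j, b j * f j t
          = b 0 * (f 0 t + ∑ i ∈ Finset.univ.erase 0, (b i / b 0) * f i t) := by
        rw [mul_add, Finset.mul_sum]
        rw [← Finset.add_sum_erase Finset.univ (fun j => b j * f j t) (Finset.mem_univ 0)]
        congr 1
        refine Finset.sum_congr rfl (fun i _ => ?_)
        field_simp
      rw [hWs, abs_mul, Real.rpow_natCast, mul_assoc]
      exact mul_le_mul_of_nonneg_left (hcnd t ht) (abs_nonneg _)
    have hρlt : ∑ l ∈ J.1.erase 0, r l < ((n:ℕ):ℝ) := by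
      have hsub : J.1.erase 0 ⊆ Finset.univ.erase 0 := fun l hl =>
        Finset.mem_erase.mpr ⟨Finset.ne_of_mem_erase hl, Finset.mem_univ l⟩
      have hne : J.1.erase 0 ≠ Finset.univ.erase 0 := by
        intro hEq
        have := congrArg Finset.card hEq
        rw [Finset.card_erase_of_mem h0J, J.2,
          Finset.card_erase_of_mem (Finset.mem_univ _), Finset.card_univ,
          Fintype.card_fin] at this
        omega
      obtain ⟨x, hxU, hxJ⟩ := Finset.exists_of_ssubset (lt_of_le_of_ne hsub hne)
      have hsub2 : J.1.erase 0 ⊆ (Finset.univ.erase (0:Fin (n+1))).erase x := by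
        intro l hl
        exact Finset.mem_erase.mpr ⟨fun hEq => hxJ (hEq ▸ hl), hsub hl⟩
      have h1 : ∑ l ∈ J.1.erase 0, r l ≤ ∑ l ∈ (Finset.univ.erase (0:Fin (n+1))).erase x, r l :=
        Finset.sum_le_sum_of_subset_of_nonneg hsub2 (fun i hi _ =>
          le_of_lt (hr_pos i (Finset.ne_of_mem_erase (Finset.mem_of_mem_erase hi))))
      have h2 : (∑ l ∈ (Finset.univ.erase (0:Fin (n+1))).erase x, r l) + r x
          = ∑ l ∈ Finset.univ.erase (0:Fin (n+1)), r l :=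
        Finset.sum_erase_add _ _ hxU
      have h3 := hr_pos x (Finset.ne_of_mem_erase hxU)
      rw [hsum] at h2
      push_cast
      linarith
    exact hassemble J h0J b ((n:ℕ):ℝ) (|b 0| * c₀) T
      (mul_pos (abs_pos.mpr hb0ne) hc₀) hρlt hWlow hid
  -- main claim: some coefficient grows
  have hmain : ∃ (J : Idx (n+1) k) (c3 δ : ℝ), 0 < c3 ∧ 0 < δ ∧ ∀ᶠ t in atTop,
      c3 * t ^ δ ≤ |lf J (ExteriorAlgebra.map (Matrix.toLin' (φ t)) v)| := by
    set SS : Finset (Idx (n+1) k) := Finset.univ.filter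
      (fun K => (0:Fin (n+1)) ∉ K.1 ∧ a K ≠ 0) with hSSdef
    have hex : ∃ K : Idx (n+1) k, a K ≠ 0 := by
      by_contra hcon
      push_neg at hcon
      exact hv0 (sep hv (fun K => hcon K))
    by_cases hSS : SS = ∅
    · obtain ⟨J, haJ⟩ := hex
      have h0J : (0:Fin (n+1)) ∈ J.1 := by
        by_contra h0
        have hmem : J ∈ SS := Finset.mem_filter.mpr ⟨Finset.mem_univ _, h0, haJ⟩
        rw [hSS] at hmem
        exact absurd hmem (Finset.notMem_empty _)
      obtain ⟨c3, δ, h1, h2, h3⟩ := hbranch2 J h0J haJ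
      exact ⟨J, c3, δ, h1, h2, h3⟩
    · have hSSne : SS.Nonempty := Finset.nonempty_of_ne_empty hSS
      have hKne : ∀ K : Idx (n+1) k, K.1.Nonempty := fun K =>
        Finset.card_pos.mp (by rw [K.2]; omega)
      set mfin : Idx (n+1) k → Fin (n+1) := fun K => K.1.min' (hKne K) with hmfin
      obtain ⟨I, hISS, hImin⟩ := Finset.mem_image.mp (Finset.min'_mem _ (hSSne.image mfin))
      set i₀ : Fin (n+1) := mfin I with hi₀def
      have h0I : (0:Fin (n+1)) ∉ I.1 := (Finset.mem_filter.mp hISS).2.1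
      have haI : a I ≠ 0 := (Finset.mem_filter.mp hISS).2.2
      have hi₀I : i₀ ∈ I.1 := Finset.min'_mem _ _
      have hi₀ne : i₀ ≠ 0 := fun hEq => h0I (hEq ▸ hi₀I)
      have hi₀min : ∀ l ∈ I.1, i₀ ≤ l := fun l hl => Finset.min'_le _ l hl
      have hi₀least : ∀ K ∈ SS, i₀ ≤ mfin K := by
        intro K hK
        have hle := Finset.min'_le (SS.image mfin) _ (Finset.mem_image_of_mem mfin hK)
        rw [← hImin] at hle
        exact hle
      have h0notIE : (0:Fin (n+1)) ∉ I.1.erase i₀ :=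
        fun hc => h0I (Finset.mem_of_mem_erase hc)
      have hcardJ : (insert (0:Fin (n+1)) (I.1.erase i₀)).card = k := by
        rw [Finset.card_insert_of_notMem h0notIE, Finset.card_erase_of_mem hi₀I, I.2]
        omega
      set J : Idx (n+1) k := ⟨insert 0 (I.1.erase i₀), hcardJ⟩ with hJdef
      have h0J : (0:Fin (n+1)) ∈ J.1 := Finset.mem_insert_self _ _
      have hJE : J.1.erase 0 = I.1.erase i₀ := by
        show (insert 0 (I.1.erase i₀)).erase 0 = _
        rw [Finset.erase_insert h0notIE]
      by_cases haJ : a J = 0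
      swap
      · obtain ⟨c3, δ, h1, h2, h3⟩ := hbranch2 J h0J haJ
        exact ⟨J, c3, δ, h1, h2, h3⟩
      · obtain ⟨b, hb1, hb2, hid⟩ := hbW J h0J
        have hcardI : ∀ j : Fin (n+1), j ∉ J.1.erase 0 →
            (insert j (J.1.erase 0)).card = k := by
          intro j hj
          rw [Finset.card_insert_of_notMem hj, Finset.card_erase_of_mem h0J, J.2]
          omega
        have hmemIE : ∀ l ∈ I.1.erase i₀, i₀ < l := by
          intro l hl
          exact lt_of_le_of_ne (hi₀min l (Finset.mem_of_mem_erase hl))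
            (Ne.symm (Finset.ne_of_mem_erase hl))
        have hbzero : ∀ j : Fin (n+1), ¬ i₀ < j → j ≠ i₀ → b j = 0 := by
          intro j hjlt hjne
          have hjnotE : j ∉ J.1.erase 0 := by
            rw [hJE]
            intro hc
            exact hjlt (hmemIE j hc)
          obtain ⟨εj, hεj, hbj⟩ := hb2 j hjnotE ⟨_, hcardI j hjnotE⟩ rfl
          rw [hbj]
          have haK : a (⟨_, hcardI j hjnotE⟩ : Idx (n+1) k) = 0 := by
            by_cases hj0 : j = 0
            · have hKJ : (⟨_, hcardI j hjnotE⟩ : Idx (n+1) k) = J := by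
                apply Subtype.ext
                show insert j (J.1.erase 0) = J.1
                rw [hj0]
                exact Finset.insert_erase h0J
              rw [hKJ]
              exact haJ
            · by_contra haKne
              have h0K : (0:Fin (n+1)) ∉ (⟨_, hcardI j hjnotE⟩ : Idx (n+1) k).1 := by
                show (0:Fin (n+1)) ∉ insert j (J.1.erase 0)
                rw [Finset.mem_insert]
                rintro (hc | hc)
                · exact hj0 hc.symm
                · exact Finset.notMem_erase _ _ hc
              have hKSS : (⟨_, hcardI j hjnotE⟩ : Idx (n+1) k) ∈ SS :=
                Finset.mem_filter.mpr ⟨Finset.mem_univ _, h0K, haKne⟩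
              have hle1 : i₀ ≤ mfin ⟨_, hcardI j hjnotE⟩ := hi₀least _ hKSS
              have hle2 : mfin ⟨_, hcardI j hjnotE⟩ ≤ j :=
                Finset.min'_le _ _ (Finset.mem_insert_self _ _)
              have hji₀ : j < i₀ := lt_of_le_of_ne (not_lt.mp hjlt) hjne
              exact absurd (le_trans hle1 hle2) (not_le.mpr hji₀)
          rw [haK, mul_zero]
        have hi₀notE : i₀ ∉ J.1.erase 0 := by
          rw [hJE]
          exact Finset.notMem_erase _ _
        obtain ⟨εi, hεi, hbi⟩ := hb2 i₀ hi₀notE I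
          (by rw [hJE]; exact (Finset.insert_erase hi₀I).symm)
        have hεine : εi ≠ 0 := by intro hEq; rw [hEq] at hεi; simp at hεi
        have hbine : b i₀ ≠ 0 := by rw [hbi]; exact mul_ne_zero hεine haI
        obtain ⟨ε₃, hε₃, c₀, hc₀, T, hT, hcnd⟩ := hcond3 i₀ hi₀ne (fun j => b j / b i₀)
        have hWlow : ∀ t : ℝ, T ≤ t →
            (|b i₀| * c₀) * t ^ ((n:ℝ) - ((i₀:ℕ):ℝ) + ε₃) ≤ |∑ j, b j * f j t| := by
          intro t ht
          have hWs : ∑ j, b j * f j t = b i₀ * (f i₀ t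
              + ∑ j ∈ Finset.univ.filter (fun j : Fin (n+1) => i₀ < j),
                  (b j / b i₀) * f j t) := by
            rw [mul_add, Finset.mul_sum]
            rw [← Finset.sum_filter_add_sum_filter_not Finset.univ
              (fun j : Fin (n+1) => i₀ < j), add_comm]
            congr 1
            · apply Finset.sum_eq_single_of_mem i₀
              · exact Finset.mem_filter.mpr ⟨Finset.mem_univ _, lt_irrefl i₀⟩
              · intro j hj hjne
                rw [hbzero j (Finset.mem_filter.mp hj).2 hjne, zero_mul]
            · refine Finset.sum_congr rfl (fun j _ => ?_)
              field_simp
          rw [hWs, abs_mul, mul_assoc]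
          exact mul_le_mul_of_nonneg_left (hcnd t ht) (abs_nonneg _)
        have hρlt : ∑ l ∈ J.1.erase 0, r l < (n:ℝ) - ((i₀:ℕ):ℝ) + ε₃ := by
          have hAeq : (Finset.univ.erase (0:Fin (n+1))).filter (fun l => i₀ < l)
              = Finset.univ.filter (fun l : Fin (n+1) => i₀ < l) := by
            ext l
            simp only [Finset.mem_filter, Finset.mem_erase, Finset.mem_univ, true_and,
              and_true]
            constructor
            · exact fun hl => hl.2
            · intro hl
              refine ⟨?_, hl⟩
              intro hc
              rw [hc] at hl
              exact absurd (lt_of_le_of_lt (Fin.zero_le i₀) hl) (lt_irrefl _)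
          have hsplit : (∑ l ∈ Finset.univ.erase (0:Fin (n+1)), r l)
              = (∑ l ∈ Finset.univ.filter (fun l : Fin (n+1) => i₀ < l), r l)
                + ∑ l ∈ (Finset.univ.erase (0:Fin (n+1))).filter (fun l => ¬ i₀ < l), r l := by
            rw [← hAeq, Finset.sum_filter_add_sum_filter_not]
          have hsub2 : J.1.erase 0 ⊆ Finset.univ.filter (fun l : Fin (n+1) => i₀ < l) := by
            intro l hl
            rw [hJE] at hl
            exact Finset.mem_filter.mpr ⟨Finset.mem_univ _, hmemIE l hl⟩
          have hpos_of_lt : ∀ l : Fin (n+1), i₀ < l → l ≠ 0 := by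
            intro l hl hc
            rw [hc] at hl
            exact absurd (lt_of_le_of_lt (Fin.zero_le i₀) hl) (lt_irrefl _)
          have h1 : ∑ l ∈ J.1.erase 0, r l
              ≤ ∑ l ∈ Finset.univ.filter (fun l : Fin (n+1) => i₀ < l), r l :=
            Finset.sum_le_sum_of_subset_of_nonneg hsub2 (fun i hi _ =>
              le_of_lt (hr_pos i (hpos_of_lt i (Finset.mem_filter.mp hi).2)))
          have hcardA : (Finset.univ.filter (fun l : Fin (n+1) => i₀ < l)).card
              = n - (i₀ : ℕ) := by
            have : Finset.univ.filter (fun l : Fin (n+1) => i₀ < l) = Finset.Ioi i₀ := by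
              ext l
              simp [Finset.mem_Ioi]
            rw [this, Fin.card_Ioi]
            omega
          have hcardB : ((Finset.univ.erase (0:Fin (n+1))).filter (fun l => ¬ i₀ < l)).card
              = (i₀ : ℕ) := by
            have : (Finset.univ.erase (0:Fin (n+1))).filter (fun l => ¬ i₀ < l)
                = Finset.Ioc 0 i₀ := by
              ext l
              simp only [Finset.mem_filter, Finset.mem_erase, Finset.mem_univ, true_and,
                and_true, Finset.mem_Ioc, not_lt]
              constructor
              · rintro ⟨hl1, hl2⟩
                exact ⟨Fin.pos_of_ne_zero hl1, hl2⟩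
              · rintro ⟨hl1, hl2⟩
                exact ⟨Fin.pos_iff_ne_zero.mp hl1, hl2⟩
            rw [this, Fin.card_Ioc]
            simp
          have hA_le : ∑ l ∈ Finset.univ.filter (fun l : Fin (n+1) => i₀ < l), r l
              ≤ (n:ℝ) - ((i₀:ℕ):ℝ) := by
            have hi₀len : (i₀ : ℕ) ≤ n := by omega
            rcases le_or_gt (r i₀) 1 with hr1 | hr1
            · have hb : ∀ l ∈ Finset.univ.filter (fun l : Fin (n+1) => i₀ < l),
                  r l ≤ 1 := by
                intro l hl
                have hl2 := (Finset.mem_filter.mp hl).2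
                exact le_trans (hr_mono i₀ l hi₀ne (hpos_of_lt l hl2) (le_of_lt hl2)) hr1
              calc ∑ l ∈ Finset.univ.filter (fun l : Fin (n+1) => i₀ < l), r l
                  ≤ ∑ _l ∈ Finset.univ.filter (fun l : Fin (n+1) => i₀ < l), (1:ℝ) :=
                    Finset.sum_le_sum hb
                _ = ((Finset.univ.filter (fun l : Fin (n+1) => i₀ < l)).card : ℝ) := by
                    rw [Finset.sum_const, nsmul_eq_mul, mul_one]
                _ = (n:ℝ) - ((i₀:ℕ):ℝ) := by
                    rw [hcardA]
                    push_cast [Nat.cast_sub hi₀len]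
                    ring
            · have hb : ∀ l ∈ (Finset.univ.erase (0:Fin (n+1))).filter (fun l => ¬ i₀ < l),
                  (1:ℝ) ≤ r l := by
                intro l hl
                have hl1 := Finset.ne_of_mem_erase (Finset.mem_of_mem_filter l hl)
                have hl2 := (Finset.mem_filter.mp hl).2
                exact le_trans (le_of_lt hr1) (hr_mono l i₀ hl1 hi₀ne (not_lt.mp hl2))
              have hBge : ((i₀:ℕ):ℝ)
                  ≤ ∑ l ∈ (Finset.univ.erase (0:Fin (n+1))).filter (fun l => ¬ i₀ < l), r l := by
                calc ((i₀:ℕ):ℝ)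
                    = (((Finset.univ.erase (0:Fin (n+1))).filter (fun l => ¬ i₀ < l)).card : ℝ) := by
                      rw [hcardB]
                  _ = ∑ _l ∈ (Finset.univ.erase (0:Fin (n+1))).filter (fun l => ¬ i₀ < l), (1:ℝ) := by
                      rw [Finset.sum_const, nsmul_eq_mul, mul_one]
                  _ ≤ _ := Finset.sum_le_sum hb
              rw [hsum] at hsplit
              linarith
          linarith
        obtain ⟨c3, δ, h1, h2, h3⟩ := hassemble J h0J b ((n:ℝ) - ((i₀:ℕ):ℝ) + ε₃)
          (|b i₀| * c₀) T (mul_pos (abs_pos.mpr hbine) hc₀) hρlt hWlow hid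
        exact ⟨J, c3, δ, h1, h2, h3⟩
  -- conclusion
  obtain ⟨J, c3, δ, hc3, hδ, hev⟩ := hmain
  obtain ⟨C, hC, hCle⟩ := norm_compare Nm hNadd hNsmul hNzero (lf J)
  have hgrow : Tendsto (fun t : ℝ => C⁻¹ * (c3 * t ^ δ)) atTop atTop := by
    apply Tendsto.const_mul_atTop (by positivity)
    exact Tendsto.const_mul_atTop hc3 (tendsto_rpow_atTop hδ)
  apply tendsto_atTop_mono' atTop ?_ hgrow
  filter_upwards [hev] with t ht
  have hmem := map_mem (k := k) (Matrix.toLin' (φ t)) hv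
  have h1 := hCle _ hmem
  have h2 : C⁻¹ * |lf J (ExteriorAlgebra.map (Matrix.toLin' (φ t)) v)|
      ≤ Nm (ExteriorAlgebra.map (Matrix.toLin' (φ t)) v) := by
    rw [inv_mul_le_iff₀ hC]
    exact h1
  calc C⁻¹ * (c3 * t ^ δ) ≤ C⁻¹ * |lf J (ExteriorAlgebra.map (Matrix.toLin' (φ t)) v)| := by
        apply mul_le_mul_of_nonneg_left ht (by positivity)
    _ ≤ _ := h2
end

section
/- The averages A(T) := (1/T)·∫₀^T cos(2π·log(1+t)) dt do not converge as T → ∞; that is, there is no real number L with A(T) → L as T → ∞. -/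
open Filter Topology

noncomputable def Flog (u : ℝ) : ℝ :=
  u * (Real.cos (2 * Real.pi * Real.log u) + 2 * Real.pi * Real.sin (2 * Real.pi * Real.log u))
    / (1 + (2 * Real.pi) ^ 2)

lemma hasDerivAt_Flog {u : ℝ} (hu : 0 < u) :
    HasDerivAt Flog (Real.cos (2 * Real.pi * Real.log u)) u := by
  have hD : (1 + (2 * Real.pi) ^ 2) ≠ 0 := by positivity
  have hlog : HasDerivAt (fun u : ℝ => 2 * Real.pi * Real.log u) (2 * Real.pi * u⁻¹) u :=
    (Real.hasDerivAt_log hu.ne').const_mul _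
  have hcos : HasDerivAt (fun u : ℝ => Real.cos (2 * Real.pi * Real.log u))
      (-Real.sin (2 * Real.pi * Real.log u) * (2 * Real.pi * u⁻¹)) u :=
    (Real.hasDerivAt_cos _).comp u hlog
  have hsin : HasDerivAt (fun u : ℝ => Real.sin (2 * Real.pi * Real.log u))
      (Real.cos (2 * Real.pi * Real.log u) * (2 * Real.pi * u⁻¹)) u :=
    (Real.hasDerivAt_sin _).comp u hlog
  have h := ((hasDerivAt_id u).mul (hcos.add (hsin.const_mul (2 * Real.pi)))).div_const
      (1 + (2 * Real.pi) ^ 2)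
  refine h.congr_deriv ?_
  simp only [id, Pi.add_apply]
  field_simp
  ring

lemma integral_eq_Flog {T : ℝ} (hT : 0 ≤ T) :
    ∫ t in (0:ℝ)..T, Real.cos (2 * Real.pi * Real.log (1 + t)) = Flog (1 + T) - Flog 1 := by
  have key : ∀ x ∈ Set.uIcc (0:ℝ) T,
      HasDerivAt (fun t => Flog (1 + t)) (Real.cos (2 * Real.pi * Real.log (1 + x))) x := by
    intro x hx
    rw [Set.uIcc_of_le hT] at hx
    have hx0 : (0:ℝ) < 1 + x := by linarith [hx.1]
    have h := (hasDerivAt_Flog hx0).comp x ((hasDerivAt_id x).const_add 1)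
    simpa [Function.comp_def] using h
  have hcont : ContinuousOn (fun t => Real.cos (2 * Real.pi * Real.log (1 + t)))
      (Set.uIcc (0:ℝ) T) := by
    apply Real.continuous_cos.comp_continuousOn
    apply ContinuousOn.mul continuousOn_const
    apply Real.continuousOn_log.comp (continuous_const.add continuous_id).continuousOn
    intro x hx
    rw [Set.uIcc_of_le hT] at hx
    simp only [Set.mem_compl_iff, Set.mem_singleton_iff]
    intro h
    have : (0:ℝ) ≤ x := hx.1
    simp at h
    linarith
  have := intervalIntegral.integral_eq_sub_of_hasDerivAt key hcont.intervalIntegrable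
  simpa using this

/-- The averages `A(T) = (1/T)·∫₀^T cos(2π·log(1+t)) dt` do not converge
as `T → ∞`. -/
theorem log_averages_do_not_converge :
    ¬ ∃ L : ℝ,
      Tendsto (fun T : ℝ =>
          (1 / T) * ∫ t in (0:ℝ)..T, Real.cos (2 * Real.pi * Real.log (1 + t)))
        atTop (𝓝 L) := by
  rintro ⟨L, hL⟩
  set D : ℝ := 1 + (2 * Real.pi) ^ 2 with hDdef
  have hDpos : 0 < D := by positivity
  have hF1 : Flog 1 = 1 / D := by
    simp [Flog, Real.log_one, hDdef]
  -- first sequence: T = exp (n+1) - 1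
  have hs : Tendsto (fun n : ℕ => Real.exp ((n:ℝ) + 1) - 1) atTop atTop := by
    apply tendsto_atTop_add_const_right
    exact Real.tendsto_exp_atTop.comp
      (tendsto_atTop_add_const_right _ 1 tendsto_natCast_atTop_atTop)
  have hval1 : ∀ n : ℕ,
      (1 / (Real.exp ((n:ℝ) + 1) - 1)) *
        ∫ t in (0:ℝ)..(Real.exp ((n:ℝ) + 1) - 1),
          Real.cos (2 * Real.pi * Real.log (1 + t)) = 1 / D := by
    intro n
    have hexp : (1:ℝ) < Real.exp ((n:ℝ) + 1) := by
      rw [Real.one_lt_exp_iff]; positivity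
    have hT0 : (0:ℝ) ≤ Real.exp ((n:ℝ) + 1) - 1 := by linarith
    rw [integral_eq_Flog hT0]
    have h1T : 1 + (Real.exp ((n:ℝ) + 1) - 1) = Real.exp ((n:ℝ) + 1) := by ring
    rw [h1T, hF1]
    have hcos : Real.cos (2 * Real.pi * ((n:ℝ) + 1)) = 1 := by
      have h := Real.cos_nat_mul_two_pi (n + 1)
      push_cast at h
      convert h using 2
      ring
    have hsin : Real.sin (2 * Real.pi * ((n:ℝ) + 1)) = 0 := by
      have h := Real.sin_int_mul_pi (2 * (n + 1))
      push_cast at h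
      convert h using 2
      ring
    rw [Flog, Real.log_exp, hcos, hsin, ← hDdef]
    have hne : Real.exp ((n:ℝ) + 1) - 1 ≠ 0 := by linarith
    field_simp
    ring
  have hL1 : L = 1 / D := by
    have h := hL.comp hs
    have h2 : Tendsto (fun _ : ℕ => (1:ℝ) / D) atTop (𝓝 L) := by
      refine h.congr fun n => ?_
      simp only [Function.comp]
      exact hval1 n
    exact tendsto_nhds_unique h2 tendsto_const_nhds
  -- second sequence: T = exp (n + 3/2) - 1, averages are negative
  have ht : Tendsto (fun n : ℕ => Real.exp ((n:ℝ) + 3/2) - 1) atTop atTop := by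
    apply tendsto_atTop_add_const_right
    exact Real.tendsto_exp_atTop.comp
      (tendsto_atTop_add_const_right _ (3/2) tendsto_natCast_atTop_atTop)
  have hval2 : ∀ n : ℕ,
      (1 / (Real.exp ((n:ℝ) + 3/2) - 1)) *
        ∫ t in (0:ℝ)..(Real.exp ((n:ℝ) + 3/2) - 1),
          Real.cos (2 * Real.pi * Real.log (1 + t)) ≤ 0 := by
    intro n
    have hexp : (1:ℝ) < Real.exp ((n:ℝ) + 3/2) := by
      rw [Real.one_lt_exp_iff]; positivity
    have hT0 : (0:ℝ) ≤ Real.exp ((n:ℝ) + 3/2) - 1 := by linarith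
    rw [integral_eq_Flog hT0]
    have h1T : 1 + (Real.exp ((n:ℝ) + 3/2) - 1) = Real.exp ((n:ℝ) + 3/2) := by ring
    rw [h1T, hF1]
    have hcos : Real.cos (2 * Real.pi * ((n:ℝ) + 3/2)) = -1 := by
      have h := Real.cos_nat_mul_two_pi_add_pi (n + 1)
      push_cast at h
      convert h using 2
      ring
    have hsin : Real.sin (2 * Real.pi * ((n:ℝ) + 3/2)) = 0 := by
      have h := Real.sin_int_mul_pi (2 * n + 3)
      push_cast at h
      convert h using 2
      ring
    rw [Flog, Real.log_exp, hcos, hsin, ← hDdef]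
    have hne : (0:ℝ) < Real.exp ((n:ℝ) + 3/2) - 1 := by linarith
    have hnum : Real.exp ((n:ℝ) + 3/2) * (-1 + 2 * Real.pi * 0) / D - 1 / D ≤ 0 := by
      have hE : (0:ℝ) < Real.exp ((n:ℝ) + 3/2) := Real.exp_pos _
      rw [div_sub_div_same, div_nonpos_iff]
      right
      constructor
      · nlinarith
      · exact hDpos.le
    have h1 : (0:ℝ) < 1 / (Real.exp ((n:ℝ) + 3/2) - 1) := by positivity
    exact mul_nonpos_of_nonneg_of_nonpos h1.le hnum
  have hL2 : L ≤ 0 := le_of_tendsto' (hL.comp ht) fun n => hval2 n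
  rw [hL1] at hL2
  have : (0:ℝ) < 1 / D := by positivity
  linarith
end

section
/- Let m ≥ 1, let ψ : [0,∞) → GL(m,ℝ) be continuous, let Q : ℝ^m → ℝ be a nonzero polynomial, and set V := {x ∈ ℝ^m : Q(x) = 0}. Suppose there exist T₀ > 0, C > 0, α > 0 such that: (a) for every v ∈ ℝ^m, the function t ↦ ‖ψ(t)v‖ is (C,α)-good on [T₀,∞); (b) for every v ∈ ℝ^m, every interval [x,y] ⊆ [T₀,∞) with |Q(ψ(t)v)| ≤ |Q(ψ(y)v)| for all t ∈ [x,y] and |Q(ψ(y)v)| > 0, and every η > 0, one has |{t ∈ [x,y] : |Q(ψ(t)v)| ≤ η}| ≤ C·(η/|Q(ψ(y)v)|)^α·(y−x); (c) for every v ∈ ℝ^m and every c > 0, the function t ↦ |Q(ψ(t)v)| attains the value c at only finitely many points in each bounded subinterval of [T₀,∞). Then for every ε > 0 and every compact set K₁ ⊆ V there exists a compact set K₂ with K₁ ⊆ K₂ ⊆ V such that: for every compact neighborhood Φ of K₂ in ℝ^m there exists a compact neighborhood Ψ of K₁ in ℝ^m with Ψ contained in the interior of Φ, such that for every v ∈ ℝ^m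 and every interval [a,b] ⊆ [T₀,∞) satisfying ψ(t)v ∈ Φ for all t ∈ [a,b] and ψ(b)v ∈ Φ∖int(Φ), one has |{t ∈ [a,b] : ψ(t)v ∈ Ψ}| ≤ ε·(b−a). -/
open Set MeasureTheory Filter Topology

/-- The Euclidean norm on `ℝ^m`. -/
noncomputable def euclNorm {m : ℕ} (x : Fin m → ℝ) : ℝ :=
  Real.sqrt (∑ i, x i ^ 2)

section AuxLemmas

open Metric

lemma euclNorm_nonneg' {m : ℕ} (x : Fin m → ℝ) : 0 ≤ euclNorm x := Real.sqrt_nonneg _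

lemma continuous_euclNorm' {m : ℕ} : Continuous (euclNorm (m := m)) := by
  unfold euclNorm
  exact Real.continuous_sqrt.comp (continuous_finset_sum _ fun i _ => (continuous_apply i).pow 2)

lemma abs_le_euclNorm' {m : ℕ} (x : Fin m → ℝ) (i : Fin m) : |x i| ≤ euclNorm x := by
  rw [← Real.sqrt_sq_eq_abs]
  exact Real.sqrt_le_sqrt (Finset.single_le_sum (fun j _ => sq_nonneg (x j)) (Finset.mem_univ i))

lemma isCompact_euclNorm_le' {m : ℕ} {R : ℝ} (hR : 0 ≤ R) :
    IsCompact {x : Fin m → ℝ | euclNorm x ≤ R} := by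
  refine (isCompact_closedBall (0 : Fin m → ℝ) R).of_isClosed_subset
    (isClosed_Iic.preimage continuous_euclNorm') ?_
  intro x hx
  rw [mem_closedBall_zero_iff]
  refine (pi_norm_le_iff_of_nonneg hR).2 fun i => ?_
  simpa [Real.norm_eq_abs] using (abs_le_euclNorm' x i).trans hx

end AuxLemmas

/-- (Relative time near algebraic varieties.) Let `ψ : [0,∞) → GL(m,ℝ)` be
continuous, `Q` a nonzero polynomial on `ℝ^m` and `V = {Q = 0}`. Under the `(C,α)`-good
hypotheses (a), (b) and the finite-level-set hypothesis (c), for every `ε > 0` and compact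
`K₁ ⊆ V` there is a compact `K₂` with `K₁ ⊆ K₂ ⊆ V` such that for every compact
neighborhood `Φ` of `K₂` there is a compact neighborhood `Ψ` of `K₁` inside the interior
of `Φ` such that for every `v ∈ ℝ^m` and interval `[a,b] ⊆ [T₀,∞)` with `ψ(t)v ∈ Φ` on
`[a,b]` and `ψ(b)v ∈ Φ∖int(Φ)`, one has `|{t ∈ [a,b] : ψ(t)v ∈ Ψ}| ≤ ε·(b−a)`. -/
theorem relative_time_near_varieties
    (m : ℕ) (hm : 1 ≤ m)
    (ψ : ℝ → Matrix (Fin m) (Fin m) ℝ)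
    (hψcont : ContinuousOn ψ (Ici (0:ℝ)))
    (hψinv : ∀ t : ℝ, 0 ≤ t → IsUnit (ψ t))
    (Q : MvPolynomial (Fin m) ℝ) (hQ : Q ≠ 0)
    (T₀ C α : ℝ) (hT₀ : 0 < T₀) (hC : 0 < C) (hα : 0 < α)
    -- (a) the norm maps `t ↦ ‖ψ(t)v‖` are `(C,α)`-good on `[T₀,∞)`
    (ha : ∀ v : Fin m → ℝ,
      IsCAlphaGood C α T₀ (fun t => euclNorm ((ψ t).mulVec v)))
    -- (b) the maps `t ↦ |Q(ψ(t)v)|` are right-max-`(C,α)`-good on `[T₀,∞)`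
    (hb : ∀ v : Fin m → ℝ, ∀ x y : ℝ, T₀ ≤ x → x ≤ y →
      (∀ t ∈ Icc x y,
        |MvPolynomial.eval ((ψ t).mulVec v) Q| ≤ |MvPolynomial.eval ((ψ y).mulVec v) Q|) →
      0 < |MvPolynomial.eval ((ψ y).mulVec v) Q| →
      ∀ η : ℝ, 0 < η →
        volume {t ∈ Icc x y | |MvPolynomial.eval ((ψ t).mulVec v) Q| ≤ η} ≤
          ENNReal.ofReal
            (C * (η / |MvPolynomial.eval ((ψ y).mulVec v) Q|) ^ α * (y - x)))
    -- (c) each positive value is attained only finitely often on bounded intervals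
    (hc : ∀ v : Fin m → ℝ, ∀ c : ℝ, 0 < c → ∀ a b : ℝ, T₀ ≤ a → a ≤ b →
      {t ∈ Icc a b | |MvPolynomial.eval ((ψ t).mulVec v) Q| = c}.Finite) :
    ∀ ε : ℝ, 0 < ε →
      ∀ K₁ : Set (Fin m → ℝ), IsCompact K₁ →
        K₁ ⊆ {x | MvPolynomial.eval x Q = 0} →
        ∃ K₂ : Set (Fin m → ℝ), IsCompact K₂ ∧ K₁ ⊆ K₂ ∧
          K₂ ⊆ {x | MvPolynomial.eval x Q = 0} ∧
          ∀ Φ : Set (Fin m → ℝ), IsCompact Φ → K₂ ⊆ interior Φ →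
            ∃ Ψ : Set (Fin m → ℝ), IsCompact Ψ ∧ K₁ ⊆ interior Ψ ∧ Ψ ⊆ interior Φ ∧
              ∀ v : Fin m → ℝ, ∀ a b : ℝ, T₀ ≤ a → a ≤ b →
                (∀ t ∈ Icc a b, (ψ t).mulVec v ∈ Φ) →
                (ψ b).mulVec v ∈ Φ \ interior Φ →
                volume {t ∈ Icc a b | (ψ t).mulVec v ∈ Ψ} ≤
                  ENNReal.ofReal (ε * (b - a)) := by
  classical
  intro ε hε K₁ hK₁c hK₁V
  have hQcont : Continuous fun x : Fin m → ℝ => MvPolynomial.eval x Q :=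
    MvPolynomial.continuous_eval Q
  have hQabs : Continuous fun x : Fin m → ℝ => |MvPolynomial.eval x Q| := hQcont.abs
  -- radius `r₁` dominating `K₁`
  set A₁ : Set ℝ := euclNorm '' K₁ ∪ {0} with hA₁def
  have hA₁c : IsCompact A₁ := (hK₁c.image continuous_euclNorm').union isCompact_singleton
  set r₀ : ℝ := sSup A₁ with hr₀def
  have hr₀0 : 0 ≤ r₀ := le_csSup hA₁c.bddAbove (Or.inr rfl)
  set r₁ : ℝ := r₀ + 1 with hr₁def
  have hr₁pos : 0 < r₁ := by linarith
  have hK₁r : ∀ x ∈ K₁, euclNorm x < r₁ := by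
    intro x hx
    have : euclNorm x ≤ r₀ := le_csSup hA₁c.bddAbove (Or.inl ⟨x, hx, rfl⟩)
    linarith
  set Mx : ℝ := max 1 ((C / ε) ^ (1/α)) with hMxdef
  have hMx1 : (1:ℝ) ≤ Mx := le_max_left _ _
  have hMxpos : (0:ℝ) < Mx := lt_of_lt_of_le one_pos hMx1
  set R₂ : ℝ := r₁ * Mx with hR₂def
  have hR₂pos : 0 < R₂ := mul_pos hr₁pos hMxpos
  refine ⟨K₁ ∪ ({x | MvPolynomial.eval x Q = 0} ∩ {x | euclNorm x ≤ R₂}), ?_,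
    subset_union_left, ?_, ?_⟩
  · exact hK₁c.union ((isCompact_euclNorm_le' hR₂pos.le).inter_left
      (isClosed_eq hQcont continuous_const))
  · rintro x (hx | hx)
    · exact hK₁V hx
    · exact hx.1
  intro Φ hΦc hK₂Φ
  -- the compact "boundary" piece within the ball of radius `R₂`
  set S : Set (Fin m → ℝ) := (Φ \ interior Φ) ∩ {x | euclNorm x ≤ R₂} with hSdef
  have hScomp : IsCompact S :=
    (isCompact_euclNorm_le' hR₂pos.le).inter_left (hΦc.isClosed.sdiff isOpen_interior)
  set A : Set ℝ := (fun x => |MvPolynomial.eval x Q|) '' S ∪ {1} with hAdef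
  have hAc : IsCompact A := (hScomp.image hQabs).union isCompact_singleton
  have hAne : A.Nonempty := ⟨1, Or.inr rfl⟩
  set δ : ℝ := sInf A with hδdef
  have hδmem : δ ∈ A := hAc.sInf_mem hAne
  have hApos : ∀ z ∈ A, 0 < z := by
    rintro z (⟨x, hxS, rfl⟩ | rfl)
    · rcases hxS with ⟨hx1, hx2⟩
      refine abs_pos.2 fun h0 => hx1.2 (hK₂Φ (Or.inr ⟨h0, hx2⟩))
    · exact one_pos
  have hδpos : 0 < δ := hApos δ hδmem
  have hδle : ∀ x ∈ S, δ ≤ |MvPolynomial.eval x Q| := fun x hx =>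
    csInf_le hAc.bddBelow (Or.inl ⟨x, hx, rfl⟩)
  set θ : ℝ := min 1 (ε / C) with hθdef
  have hθpos : 0 < θ := lt_min one_pos (div_pos hε hC)
  have hθrpow_pos : 0 < θ ^ (1/α) := Real.rpow_pos_of_pos hθpos _
  have hθ1 : θ ^ (1/α) ≤ 1 := Real.rpow_le_one hθpos.le (min_le_left _ _) (by positivity)
  set η : ℝ := δ / 2 * θ ^ (1/α) with hηdef
  have hηpos : 0 < η := by positivity
  have hηδ : η < δ := by
    have : δ / 2 * θ ^ (1/α) ≤ δ / 2 * 1 := by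
      apply mul_le_mul_of_nonneg_left hθ1 (by positivity)
    rw [hηdef]; nlinarith
  have hkey : C * (η / δ) ^ α ≤ ε := by
    have hηδval : η / δ = θ ^ (1/α) / 2 := by
      rw [hηdef]; field_simp
    have h1 : (η / δ) ^ α ≤ θ := by
      rw [hηδval]
      calc (θ ^ (1/α) / 2) ^ α ≤ (θ ^ (1/α)) ^ α := by
            apply Real.rpow_le_rpow (by positivity) (by linarith) hα.le
        _ = θ := by
            rw [← Real.rpow_mul hθpos.le, one_div, inv_mul_cancel₀ hα.ne', Real.rpow_one]
    calc C * (η / δ) ^ α ≤ C * (ε / C) :=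
          mul_le_mul_of_nonneg_left (h1.trans (min_le_right _ _)) hC.le
      _ = ε := by field_simp
  -- the open set `U` and the neighborhood `Ψ`
  set U : Set (Fin m → ℝ) :=
    interior Φ ∩ {x | |MvPolynomial.eval x Q| < η} ∩ {x | euclNorm x < r₁} with hUdef
  have hUopen : IsOpen U :=
    ((isOpen_interior.inter (isOpen_lt hQabs continuous_const)).inter
      (isOpen_lt continuous_euclNorm' continuous_const))
  have hK₁U : K₁ ⊆ U := by
    intro x hx
    refine ⟨⟨hK₂Φ (Or.inl hx), ?_⟩, hK₁r x hx⟩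
    have : MvPolynomial.eval x Q = 0 := hK₁V hx
    simpa [this] using hηpos
  obtain ⟨s, hspos, hsub⟩ := hK₁c.exists_cthickening_subset_open hUopen hK₁U
  refine ⟨Metric.cthickening s K₁, hK₁c.cthickening, ?_, ?_, ?_⟩
  · exact fun x hx => interior_maximal (Metric.thickening_subset_cthickening s K₁)
      Metric.isOpen_thickening (Metric.self_subset_thickening hspos K₁ hx)
  · exact hsub.trans fun x hx => hx.1.1
  intro v a b hT₀a hab htraj hbdry
  have h0a : (0:ℝ) ≤ a := hT₀.le.trans hT₀a
  have hIcc0 : Icc a b ⊆ Ici (0:ℝ) := fun t ht => h0a.trans ht.1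
  have htrajCont : ContinuousOn (fun t => (ψ t).mulVec v) (Icc a b) :=
    ((continuous_id.matrix_mulVec continuous_const).comp_continuousOn hψcont).mono hIcc0
  rcases le_or_gt (euclNorm ((ψ b).mulVec v)) R₂ with hcase | hcase
  · -- Case 2 : the endpoint has moderate norm, hence `|Q|` is at least `δ` there
    set g : ℝ → ℝ := fun t => |MvPolynomial.eval ((ψ t).mulVec v) Q| with hgdef
    have hgcont : ContinuousOn g (Icc a b) := hQabs.comp_continuousOn htrajCont
    have hpS : (ψ b).mulVec v ∈ S := ⟨hbdry, hcase⟩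
    have hgb : δ ≤ g b := hδle _ hpS
    have hF := hc v δ hδpos a b hT₀a hab
    set Fs : Finset ℝ := hF.toFinset with hFsdef
    have hFmem : ∀ {y : ℝ}, y ∈ Fs ↔ y ∈ Icc a b ∧ g y = δ := by
      intro y; rw [hFsdef, Set.Finite.mem_toFinset]; exact Iff.rfl
    set X : ℝ → ℝ := fun y => sSup ({a} ∪ {u | u ∈ Ico a y ∧ δ ≤ g u}) with hXdef
    have hXbdd : ∀ y, a ≤ y → BddAbove ({a} ∪ {u | u ∈ Ico a y ∧ δ ≤ g u}) := by
      intro y hy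
      refine ⟨y, ?_⟩
      rintro z (rfl | ⟨hz, -⟩)
      exacts [hy, hz.2.le]
    have hXa : ∀ y, a ≤ y → a ≤ X y := fun y hy => le_csSup (hXbdd y hy) (Or.inl rfl)
    have hXy : ∀ y, a ≤ y → X y ≤ y := by
      intro y hy
      apply csSup_le ⟨a, Or.inl rfl⟩
      rintro z (rfl | ⟨hz, -⟩)
      exacts [hy, hz.2.le]
    have hXlt : ∀ y, a ≤ y → ∀ u, X y < u → u < y → g u < δ := by
      intro y hy u hu1 hu2
      by_contra h
      push_neg at h
      exact absurd (le_csSup (hXbdd y hy) (Or.inr ⟨⟨(hXa y hy).trans hu1.le, hu2⟩, h⟩))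
        (not_le.2 hu1)
    have hmax : ∀ y ∈ Fs, ∀ u ∈ Icc (X y) y, g u ≤ δ := by
      intro y hy u hu
      obtain ⟨⟨hay, hyb⟩, hgy⟩ := hFmem.1 hy
      rcases eq_or_lt_of_le hu.2 with rfl | huy
      · exact le_of_eq hgy
      rcases eq_or_lt_of_le hu.1 with heq | hlt
      · -- `u = X y` : use the limit from the right
        have hXyy : X y < y := heq ▸ huy
        have hIoosub : Ioo (X y) y ⊆ Icc a b := fun z hz =>
          ⟨(hXa y hay).trans hz.1.le, hz.2.le.trans hyb⟩
        have hXmem : X y ∈ Icc a b := ⟨hXa y hay, (hXy y hay).trans hyb⟩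
        have htd : Filter.Tendsto g (𝓝[Ioo (X y) y] (X y)) (𝓝 (g (X y))) :=
          (hgcont.continuousWithinAt hXmem).mono hIoosub
        have hne : (𝓝[Ioo (X y) y] (X y)).NeBot := by
          rw [nhdsWithin_Ioo_eq_nhdsGT hXyy]; infer_instance
        have hlim : g (X y) ≤ δ :=
          le_of_tendsto htd (eventually_nhdsWithin_of_forall fun z hz =>
            (hXlt y hay z hz.1 hz.2).le)
        exact heq ▸ hlim
      · exact (hXlt y hay u hlt huy).le
    have hvol : ∀ y ∈ Fs,
        volume {u ∈ Icc (X y) y | g u ≤ η} ≤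
          ENNReal.ofReal (C * (η / δ) ^ α * (y - X y)) := by
      intro y hy
      obtain ⟨⟨hay, hyb⟩, hgy⟩ := hFmem.1 hy
      have h1 := hb v (X y) y (hT₀a.trans (hXa y hay)) (hXy y hay)
        (fun u hu => (hmax y hy u hu).trans_eq hgy.symm)
        (by rw [show |MvPolynomial.eval ((ψ y).mulVec v) Q| = δ from hgy]; exact hδpos)
        η hηpos
      rw [show |MvPolynomial.eval ((ψ y).mulVec v) Q| = δ from hgy] at h1
      exact h1
    have hcover : {t ∈ Icc a b | (ψ t).mulVec v ∈ Metric.cthickening s K₁} ⊆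
        ⋃ y ∈ Fs, {u ∈ Icc (X y) y | g u ≤ η} := by
      rintro t ⟨htab, htΨ⟩
      have hgt : g t ≤ η := ((hsub htΨ).1.2).le
      set Sy : Set ℝ := {u | u ∈ Icc t b ∧ δ ≤ g u} with hSydef
      have hSyclosed : IsClosed Sy := by
        have hrw : Sy = Icc t b ∩ g ⁻¹' (Ici δ) := by
          ext u; simp [hSydef, Set.mem_setOf_eq, Set.mem_preimage, Set.mem_Ici]
        rw [hrw]
        exact (hgcont.mono (Icc_subset_Icc_left htab.1)).preimage_isClosed_of_isClosed
          isClosed_Icc isClosed_Ici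
      have hSyne : Sy.Nonempty := ⟨b, ⟨htab.2, le_refl b⟩, hgb⟩
      have hSybdd : BddBelow Sy := ⟨t, fun z hz => hz.1.1⟩
      obtain ⟨y, hydef⟩ : ∃ y, y = sInf Sy := ⟨_, rfl⟩
      have hymem : y ∈ Sy := hydef ▸ hSyclosed.csInf_mem hSyne hSybdd
      have hty : t ≤ y := hymem.1.1
      have hyb : y ≤ b := hymem.1.2
      have htlty : t < y := by
        rcases eq_or_lt_of_le hty with rfl | h
        · exact absurd hymem.2 (not_le.2 (lt_of_le_of_lt hgt hηδ))
        · exact h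
      have hlty : ∀ u, t < u → u < y → g u < δ := by
        intro u h1 h2
        by_contra h
        push_neg at h
        exact absurd (hydef ▸ csInf_le hSybdd ⟨⟨h1.le, h2.le.trans hyb⟩, h⟩) (not_le.2 h2)
      have hgyle : g y ≤ δ := by
        have htd : Filter.Tendsto g (𝓝[Ioo t y] y) (𝓝 (g y)) :=
          (hgcont.continuousWithinAt ⟨htab.1.trans hty, hyb⟩).mono
            (fun z hz => ⟨htab.1.trans hz.1.le, hz.2.le.trans hyb⟩)
        have hne : (𝓝[Ioo t y] y).NeBot := by
          rw [nhdsWithin_Ioo_eq_nhdsLT htlty]; infer_instance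
        exact le_of_tendsto htd (eventually_nhdsWithin_of_forall fun z hz =>
          (hlty z hz.1 hz.2).le)
      have hgy : g y = δ := le_antisymm hgyle hymem.2
      have hyFs : y ∈ Fs := hFmem.2 ⟨⟨htab.1.trans hty, hyb⟩, hgy⟩
      have hXyt : X y ≤ t := by
        apply csSup_le ⟨a, Or.inl rfl⟩
        rintro z (rfl | ⟨⟨hz1, hz2⟩, hz3⟩)
        · exact htab.1
        · by_contra h
          push_neg at h
          exact absurd hz3 (not_le.2 (hlty z h hz2))
      exact Set.mem_biUnion hyFs ⟨⟨hXyt, hty⟩, hgt⟩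
    have hdisjkey : ∀ y ∈ Fs, ∀ y' ∈ Fs, y < y' →
        Disjoint (Ioo (X y) y) (Ioo (X y') y') := by
      intro y hy y' hy' hlt
      obtain ⟨⟨hay, hyb⟩, hgy⟩ := hFmem.1 hy
      obtain ⟨⟨hay', hyb'⟩, hgy'⟩ := hFmem.1 hy'
      have hXy' : y ≤ X y' := le_csSup (hXbdd y' hay') (Or.inr ⟨⟨hay, hlt⟩, hgy.ge⟩)
      rw [Set.disjoint_left]
      intro z hz hz'
      exact absurd (hz.2.trans_le (hXy'.trans hz'.1.le)) (lt_irrefl z)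
    have hdisj : (↑Fs : Set ℝ).PairwiseDisjoint fun y => Ioo (X y) y := by
      intro y hy y' hy' hne
      rcases hne.lt_or_gt with h | h
      · exact hdisjkey y (Finset.mem_coe.1 hy) y' (Finset.mem_coe.1 hy') h
      · exact (hdisjkey y' (Finset.mem_coe.1 hy') y (Finset.mem_coe.1 hy) h).symm
    have hlensum : ∑ y ∈ Fs, (y - X y) ≤ b - a := by
      have h1 : ∑ y ∈ Fs, volume (Ioo (X y) y) = volume (⋃ y ∈ Fs, Ioo (X y) y) :=
        (measure_biUnion_finset hdisj fun _ _ => measurableSet_Ioo).symm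
      have h2 : volume (⋃ y ∈ Fs, Ioo (X y) y) ≤ volume (Icc a b) := by
        apply measure_mono
        refine Set.iUnion₂_subset fun y hy => ?_
        obtain ⟨⟨hay, hyb⟩, -⟩ := hFmem.1 hy
        exact fun z hz => ⟨(hXa y hay).trans hz.1.le, hz.2.le.trans hyb⟩
      rw [Real.volume_Icc] at h2
      have h3 : ∑ y ∈ Fs, ENNReal.ofReal (y - X y) ≤ ENNReal.ofReal (b - a) := by
        calc ∑ y ∈ Fs, ENNReal.ofReal (y - X y)
            = ∑ y ∈ Fs, volume (Ioo (X y) y) := by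
              refine Finset.sum_congr rfl fun y hy => ?_
              rw [Real.volume_Ioo]
          _ ≤ ENNReal.ofReal (b - a) := h1 ▸ h2
      rw [← ENNReal.ofReal_sum_of_nonneg
        (fun y hy => sub_nonneg.2 (hXy y (hFmem.1 hy).1.1))] at h3
      exact (ENNReal.ofReal_le_ofReal_iff (by linarith)).1 h3
    have hc0 : 0 ≤ C * (η / δ) ^ α :=
      mul_nonneg hC.le (Real.rpow_nonneg (div_nonneg hηpos.le hδpos.le) α)
    calc volume {t ∈ Icc a b | (ψ t).mulVec v ∈ Metric.cthickening s K₁}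
        ≤ volume (⋃ y ∈ Fs, {u ∈ Icc (X y) y | g u ≤ η}) := measure_mono hcover
      _ ≤ ∑ y ∈ Fs, volume {u ∈ Icc (X y) y | g u ≤ η} := measure_biUnion_finset_le Fs _
      _ ≤ ∑ y ∈ Fs, ENNReal.ofReal (C * (η / δ) ^ α * (y - X y)) := Finset.sum_le_sum hvol
      _ = ENNReal.ofReal (∑ y ∈ Fs, C * (η / δ) ^ α * (y - X y)) :=
          (ENNReal.ofReal_sum_of_nonneg fun y hy =>
            mul_nonneg hc0 (sub_nonneg.2 (hXy y (hFmem.1 hy).1.1))).symm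
      _ ≤ ENNReal.ofReal (ε * (b - a)) := by
          apply ENNReal.ofReal_le_ofReal
          rw [← Finset.mul_sum]
          calc C * (η / δ) ^ α * ∑ y ∈ Fs, (y - X y)
              ≤ C * (η / δ) ^ α * (b - a) := mul_le_mul_of_nonneg_left hlensum hc0
            _ ≤ ε * (b - a) := mul_le_mul_of_nonneg_right hkey (by linarith)
  · -- Case 1 : the endpoint has large norm
    set G : ℝ → ℝ := fun t => |euclNorm ((ψ t).mulVec v)| with hGdef
    have hGcont : ContinuousOn G (Icc a b) := continuous_abs.comp_continuousOn
      (continuous_euclNorm'.comp_continuousOn htrajCont)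
    have hbddG : BddAbove (G '' Icc a b) := (isCompact_Icc.image_of_continuousOn hGcont).bddAbove
    have hGbS : G b ≤ sSup (G '' Icc a b) := le_csSup hbddG ⟨b, ⟨hab, le_refl b⟩, rfl⟩
    have hR₂S₀ : R₂ < sSup (G '' Icc a b) := by
      refine lt_of_lt_of_le ?_ hGbS
      rw [hGdef]
      simpa [abs_of_nonneg (euclNorm_nonneg' _)] using hcase
    have hS₀pos : 0 < sSup (G '' Icc a b) := hR₂pos.trans hR₂S₀
    have key := ha v a b hT₀a hab hS₀pos r₁ hr₁pos
    refine le_trans (measure_mono ?_) (le_trans key (ENNReal.ofReal_le_ofReal ?_))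
    · rintro t ⟨htab, htΨ⟩
      refine ⟨htab, ?_⟩
      rw [abs_of_nonneg (euclNorm_nonneg' _)]
      exact ((hsub htΨ).2).le
    · -- `C * (r₁ / S₀) ^ α * (b - a) ≤ ε * (b - a)`
      set S₀ : ℝ := sSup (G '' Icc a b) with hS₀def
      have h2 : r₁ / S₀ ≤ (ε / C) ^ (1/α) := by
        have e1 : r₁ / S₀ ≤ r₁ / R₂ :=
          div_le_div_of_nonneg_left hr₁pos.le hR₂pos hR₂S₀.le
        have e2 : r₁ / R₂ = 1 / Mx := by
          rw [hR₂def]; field_simp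
        have hpow : (0:ℝ) < (C / ε) ^ (1/α) := Real.rpow_pos_of_pos (div_pos hC hε) _
        have e3 : (1:ℝ) / Mx ≤ (ε / C) ^ (1/α) := by
          calc (1:ℝ) / Mx ≤ 1 / ((C / ε) ^ (1/α)) :=
                one_div_le_one_div_of_le hpow (le_max_right _ _)
            _ = (ε / C) ^ (1/α) := by
                rw [one_div, ← Real.inv_rpow (div_nonneg hC.le hε.le), inv_div]
        calc r₁ / S₀ ≤ r₁ / R₂ := e1
          _ = 1 / Mx := e2
          _ ≤ (ε / C) ^ (1/α) := e3
      have h3 : (r₁ / S₀) ^ α ≤ ε / C := by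
        calc (r₁ / S₀) ^ α ≤ ((ε / C) ^ (1/α)) ^ α :=
              Real.rpow_le_rpow (div_nonneg hr₁pos.le hS₀pos.le) h2 hα.le
          _ = ε / C := by
              rw [← Real.rpow_mul (div_nonneg hε.le hC.le), one_div,
                inv_mul_cancel₀ hα.ne', Real.rpow_one]
      have h4 : C * (r₁ / S₀) ^ α ≤ ε := by
        calc C * (r₁ / S₀) ^ α ≤ C * (ε / C) := mul_le_mul_of_nonneg_left h3 hC.le
          _ = ε := by field_simp
      exact mul_le_mul_of_nonneg_right h4 (by linarith)
end
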